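/- arXiv:1901.06741 — 8 statements merged into one kernel-verified Lean document; each statement's English description precedes it below -/
import Mathlib

section
/- For every function k : ℕ → ℕ with k(n)·log(n)/n^{1/3} → 0 as n → ∞, there exist a constant C > 0 and a threshold n₀ such that for every prime power q with n = q² ≥ n₀ and k(n) ≥ 1, there exists a binary primitive linear [n + r, n, k(n)]^B batch code with redundancy r ≤ C·k(n)^{3/2}·√n·log n. -/
/-- A binary primitive linear `[N, n, k]` batch code: an injective `𝔽₂`-linear
encoding map such that every multiset request of `k` coordinates (given by a
function `r : Fin k → Fin n`) admits `k` pairwise disjoint recovering sets. -/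
def IsBatchCode (N n k : ℕ)
    (enc : (Fin n → ZMod 2) →ₗ[ZMod 2] (Fin N → ZMod 2)) : Prop :=
  Function.Injective enc ∧
  ∀ r : Fin k → Fin n, ∃ R : Fin k → Finset (Fin N),
    (∀ t₁ t₂ : Fin k, t₁ ≠ t₂ → Disjoint (R t₁) (R t₂)) ∧
    ∀ (x : Fin n → ZMod 2) (t : Fin k), x (r t) = ∑ p ∈ R t, enc x p


namespace BatchAux

open Finset Filter Real

/-- The block of `v` in the partition of `Fin n` given by `f`. -/
def blk (f : Fin n → Fin m) (v : Fin n) : Finset (Fin n) :=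
  Finset.univ.filter (fun u => f u = f v)

lemma mem_blk_self (f : Fin n → Fin m) (v : Fin n) : v ∈ blk f v := by
  simp [blk]

/-- The cells of a recovering set: the block minus the point itself. -/
def cls (f : Fin n → Fin m) (v : Fin n) : Finset (Fin n) := (blk f v).erase v

lemma card_blk (f : Fin n → Fin m) (v : Fin n) :
    (blk f v).card = (cls f v).card + 1 := by
  rw [cls, ← Finset.card_erase_add_one (mem_blk_self f v)]

/-- Counting functions with `f u = f v`. -/
lemma card_pair (u v : Fin n) (h : u ≠ v) :
    ((Finset.univ : Finset (Fin n → Fin m)).filter (fun f => f u = f v)).card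
      ≤ m ^ (n - 1) := by
  classical
  have : ((Finset.univ : Finset (Fin n → Fin m)).filter (fun f => f u = f v)).card
      ≤ (Finset.univ : Finset ({w : Fin n // w ≠ u} → Fin m)).card := by
    apply Finset.card_le_card_of_injOn (fun f => fun w => f w.1)
    · intro f _; exact Finset.mem_univ _
    · intro f hf g hg hfg
      simp only [Finset.mem_coe, Finset.mem_filter] at hf hg
      funext w
      by_cases hw : w = u
      · subst hw
        have h1 := congrFun hfg ⟨v, h.symm⟩
        simpa [hf.2, hg.2] using h1
      · exact congrFun hfg ⟨w, hw⟩
  refine this.trans ?_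
  rw [Finset.card_univ, Fintype.card_fun]
  simp [Fintype.card_subtype_compl]

lemma cls_eq (f : Fin n → Fin m) (v : Fin n) :
    cls f v = (Finset.univ.erase v).filter (fun u => f u = f v) := by
  ext u; simp only [cls, blk, Finset.mem_erase, Finset.mem_filter, Finset.mem_univ, true_and]; tauto

/-- Markov: the total size of the cells over the random partition. -/
lemma sum_card_cls (v : Fin n) :
    ∑ f : Fin n → Fin m, (cls f v).card ≤ (n - 1) * m ^ (n - 1) := by
  classical
  have h1 : ∀ f : Fin n → Fin m, (cls f v).card
      = ∑ u ∈ Finset.univ.erase v, (if f u = f v then 1 else 0) := by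
    intro f; rw [cls_eq, Finset.card_filter]
  calc ∑ f : Fin n → Fin m, (cls f v).card
      = ∑ f : Fin n → Fin m, ∑ u ∈ Finset.univ.erase v,
          (if f u = f v then 1 else 0) := by
        exact Finset.sum_congr rfl (fun f _ => h1 f)
    _ = ∑ u ∈ Finset.univ.erase v, ∑ f : Fin n → Fin m,
          (if f u = f v then 1 else 0) := Finset.sum_comm
    _ ≤ ∑ u ∈ Finset.univ.erase v, m ^ (n - 1) := by
        apply Finset.sum_le_sum
        intro u hu
        have hu' : u ≠ v := (Finset.mem_erase.mp hu).1
        have := card_pair (m := m) u v hu'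
        rw [← Finset.card_filter]
        simpa using this
    _ = (n - 1) * m ^ (n - 1) := by
        rw [Finset.sum_const, Finset.card_erase_of_mem (Finset.mem_univ v)]
        simp [Finset.card_univ]

/-- The set of bad layers for point `v` w.r.t. forbidden set `F`. -/
def badF (S : ℕ) (v : Fin n) (F : Finset (Fin n)) : Finset (Fin n → Fin m) :=
  Finset.univ.filter
    (fun f => S < (blk f v).card ∨ ¬ Disjoint (cls f v) F)

lemma two_mul_card_badF (k S : ℕ) (hm : m = 4 * k * S) (hn1 : 1 ≤ n)
    (hS : 1 ≤ S) (hnS : n ≤ k * S * S + 1) (v : Fin n) (F : Finset (Fin n))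
    (hF : F.card ≤ k * S) :
    2 * (badF (m := m) S v F).card ≤ m ^ n := by
  classical
  set M : Finset (Fin n → Fin m) :=
    Finset.univ.filter (fun f => S < (blk f v).card) with hM
  set H : Finset (Fin n → Fin m) :=
    Finset.univ.filter (fun f => ¬ Disjoint (cls f v) F) with hH
  have hsub : badF S v F ⊆ M ∪ H := by
    intro f hf
    rw [badF, Finset.mem_filter] at hf
    rcases hf.2 with h | h
    · exact Finset.mem_union_left _ (by simp [hM, h])
    · exact Finset.mem_union_right _ (by simp [hH, h])
  have hMcard : 4 * M.card ≤ m ^ n := by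
    have h1 : M.card • S ≤ ∑ f ∈ M, (cls f v).card := by
      apply Finset.card_nsmul_le_sum
      intro f hf
      rw [hM, Finset.mem_filter] at hf
      have := hf.2
      rw [card_blk] at this
      omega
    have h2 : ∑ f ∈ M, (cls f v).card ≤ ∑ f : Fin n → Fin m, (cls f v).card :=
      Finset.sum_le_sum_of_subset (Finset.subset_univ M)
    have h3 : S * M.card ≤ (n - 1) * m ^ (n - 1) := by
      rw [smul_eq_mul, mul_comm] at h1
      exact h1.trans (h2.trans (sum_card_cls v))
    have h4 : 4 * (n - 1) ≤ S * m := by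
      rw [hm]
      have : n - 1 ≤ k * S * S := by omega
      calc 4 * (n - 1) ≤ 4 * (k * S * S) := by omega
        _ = S * (4 * k * S) := by ring
    -- 4 * S * M.card ≤ 4*(n-1)*m^(n-1) ≤ S*m*m^(n-1) = S*m^n
    have h5 : S * (4 * M.card) ≤ S * m ^ n := by
      calc S * (4 * M.card) = 4 * (S * M.card) := by ring
        _ ≤ 4 * ((n - 1) * m ^ (n - 1)) := Nat.mul_le_mul_left 4 h3
        _ = (4 * (n - 1)) * m ^ (n - 1) := by ring
        _ ≤ (S * m) * m ^ (n - 1) := Nat.mul_le_mul_right _ h4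
        _ = S * (m ^ (n - 1) * m) := by ring
        _ = S * m ^ n := by
            rw [← pow_succ, Nat.sub_add_cancel hn1]
    exact Nat.le_of_mul_le_mul_left h5 (by omega)
  have hHcard : 4 * H.card ≤ m ^ n := by
    have hsub2 : H ⊆ (F.erase v).biUnion
        (fun u => Finset.univ.filter (fun f => f u = f v)) := by
      intro f hf
      rw [hH, Finset.mem_filter] at hf
      obtain ⟨u, hu1, hu2⟩ := Finset.not_disjoint_iff.mp hf.2
      rw [cls, Finset.mem_erase] at hu1
      refine Finset.mem_biUnion.mpr ⟨u, Finset.mem_erase.mpr ⟨hu1.1, hu2⟩, ?_⟩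
      rw [Finset.mem_filter]
      refine ⟨Finset.mem_univ _, ?_⟩
      have := hu1.2
      rw [blk, Finset.mem_filter] at this
      exact this.2
    have h1 : H.card ≤ (k * S) * m ^ (n - 1) := by
      calc H.card ≤ ∑ u ∈ F.erase v, ((Finset.univ : Finset (Fin n → Fin m)).filter
            (fun f => f u = f v)).card :=
            (Finset.card_le_card hsub2).trans (Finset.card_biUnion_le)
        _ ≤ ∑ u ∈ F.erase v, m ^ (n - 1) := by
            apply Finset.sum_le_sum
            intro u hu
            exact card_pair u v (Finset.mem_erase.mp hu).1
        _ = (F.erase v).card * m ^ (n - 1) := by rw [Finset.sum_const, smul_eq_mul]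
        _ ≤ (k * S) * m ^ (n - 1) := by
            apply Nat.mul_le_mul_right
            exact (Finset.card_erase_le).trans hF
    calc 4 * H.card ≤ 4 * ((k * S) * m ^ (n - 1)) := Nat.mul_le_mul_left 4 h1
      _ = (4 * k * S) * m ^ (n - 1) := by ring
      _ = m ^ (n - 1) * m := by rw [hm]; ring
      _ = m ^ n := by rw [← pow_succ, Nat.sub_add_cancel hn1]
  have := Finset.card_le_card hsub
  have := Finset.card_union_le M H
  omega

section Event

variable {k d : ℕ}

/-- Layers used by the prefix. -/
def lset (t : Fin k) (ℓ : Fin k → Fin d) : Finset (Fin d) :=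
  (Finset.univ.filter (fun j => j < t)).image ℓ

/-- Forbidden set: union of the blocks of the prefix. -/
def fset (ω : Fin d → Fin n → Fin m) (v : Fin k → Fin n) (t : Fin k)
    (ℓ : Fin k → Fin d) : Finset (Fin n) :=
  (Finset.univ.filter (fun j => j < t)).biUnion (fun j => blk (ω (ℓ j)) (v j))

/-- The bad event: prefix blocks are small but no fresh layer is good. -/
def Ev (S : ℕ) (v : Fin k → Fin n) (t : Fin k) (ℓ : Fin k → Fin d)
    (ω : Fin d → Fin n → Fin m) : Prop :=
  (∀ j : Fin k, j < t → (blk (ω (ℓ j)) (v j)).card ≤ S) ∧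
  ∀ l : Fin d, l ∉ lset t ℓ →
    (S < (blk (ω l) (v t)).card ∨ ¬ Disjoint (cls (ω l) (v t)) (fset ω v t ℓ))

instance EvDec (S : ℕ) (v : Fin k → Fin n) (t : Fin k) (ℓ : Fin k → Fin d) :
    DecidablePred (Ev (m := m) S v t ℓ) := fun ω => by
  unfold Ev; infer_instance

lemma card_Ev (hk1 : 1 ≤ k) (S : ℕ) (hm : m = 4 * k * S) (hn1 : 1 ≤ n)
    (hS : 1 ≤ S) (hnS : n ≤ k * S * S + 1)
    (v : Fin k → Fin n) (t : Fin k) (ℓ : Fin k → Fin d) :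
    2 ^ (d - k) * ((Finset.univ : Finset (Fin d → Fin n → Fin m)).filter
      (Ev S v t ℓ)).card ≤ (m ^ n) ^ d := by
  classical
  have hm0 : 0 < m := by
    rw [hm]; positivity
  set X := (Fin n → Fin m)
  set B := m ^ n with hB
  have hBcard : (Finset.univ : Finset X).card = B := by
    rw [Finset.card_univ, hB]
    simp [X, Fintype.card_fun]
  set dflt : X := (fun _ => ⟨0, hm0⟩) with hdflt
  set L := lset t ℓ with hL
  have hLk : L.card ≤ k := by
    refine (Finset.card_image_le).trans ?_
    exact (Finset.card_filter_le _ _).trans (by simp)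
  have hLd : L.card ≤ d := by
    exact (Finset.card_le_card (Finset.subset_univ L)).trans (by simp)
  set ρ : (Fin d → X) → (Fin d → X) :=
    (fun ω l => if l ∈ L then ω l else dflt) with hρ
  set A : Finset (Fin d → X) :=
    Fintype.piFinset (fun l => if l ∈ L then (Finset.univ : Finset X) else {dflt})
    with hA
  have hAcard : A.card = B ^ L.card := by
    rw [hA, Fintype.card_piFinset]
    have : ∀ l : Fin d,
        ((if l ∈ L then (Finset.univ : Finset X) else {dflt}).card)
          = (if l ∈ L then B else 1) := by
      intro l
      by_cases h : l ∈ L <;> simp [h, hBcard]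
    rw [Finset.prod_congr rfl (fun l _ => this l)]
    rw [Finset.prod_ite_mem, Finset.univ_inter, Finset.prod_const]
  set s := (Finset.univ : Finset (Fin d → X)).filter (Ev S v t ℓ) with hs
  have hfib : s.card = ∑ a ∈ A, (s.filter (fun ω => ρ ω = a)).card := by
    apply Finset.card_eq_sum_card_fiberwise
    intro ω _
    rw [hA, Finset.mem_coe, Fintype.mem_piFinset]
    intro l
    by_cases h : l ∈ L <;> simp [ρ, h]
  have hper : ∀ a ∈ A, 2 ^ (d - k) * (s.filter (fun ω => ρ ω = a)).card
      ≤ B ^ (d - L.card) := by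
    intro a _
    by_cases hne : (s.filter (fun ω => ρ ω = a)).Nonempty
    · obtain ⟨ω₀, hω₀⟩ := hne
      rw [Finset.mem_filter] at hω₀
      obtain ⟨hω₀s, hρω₀⟩ := hω₀
      rw [hs, Finset.mem_filter] at hω₀s
      have hEv₀ : Ev S v t ℓ ω₀ := hω₀s.2
      have hkey : ∀ j : Fin k, j < t → a (ℓ j) = ω₀ (ℓ j) := by
        intro j hj
        have hmem : ℓ j ∈ L := by
          rw [hL, lset]
          exact Finset.mem_image_of_mem ℓ (by simp [hj])
        rw [← hρω₀]
        simp [ρ, hmem]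
      set Fa : Finset (Fin n) :=
        (Finset.univ.filter (fun j => j < t)).biUnion
          (fun j => blk (a (ℓ j)) (v j)) with hFa
      have hFaeq : ∀ ω : Fin d → X, ρ ω = a → fset ω v t ℓ = Fa := by
        intro ω hρω
        rw [fset, hFa]
        apply Finset.biUnion_congr rfl
        intro j hj
        rw [Finset.mem_filter] at hj
        have hmem : ℓ j ∈ L := by
          rw [hL, lset]
          exact Finset.mem_image_of_mem ℓ (by simp [hj.2])
        have : a (ℓ j) = ω (ℓ j) := by
          rw [← hρω]; simp [ρ, hmem]
        rw [this]
      have hFacard : Fa.card ≤ k * S := by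
        rw [hFa]
        refine Finset.card_biUnion_le.trans ?_
        calc ∑ j ∈ Finset.univ.filter (fun j => j < t), (blk (a (ℓ j)) (v j)).card
            ≤ ∑ j ∈ Finset.univ.filter (fun j => j < t), S := by
              apply Finset.sum_le_sum
              intro j hj
              rw [Finset.mem_filter] at hj
              rw [hkey j hj.2]
              exact hEv₀.1 j hj.2
          _ = (Finset.univ.filter (fun j : Fin k => j < t)).card * S := by
              rw [Finset.sum_const, smul_eq_mul]
          _ ≤ k * S := by
              apply Nat.mul_le_mul_right
              exact (Finset.card_filter_le _ _).trans (by simp)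
      have hbad : 2 * (badF (m := m) S (v t) Fa).card ≤ B :=
        two_mul_card_badF k S hm hn1 hS hnS (v t) Fa hFacard
      set c := (badF (m := m) S (v t) Fa).card with hc
      have hsub : s.filter (fun ω => ρ ω = a) ⊆
          Fintype.piFinset (fun l => if l ∈ L then {a l}
            else badF (m := m) S (v t) Fa) := by
        intro ω hω
        rw [Finset.mem_filter] at hω
        obtain ⟨hωs, hρω⟩ := hω
        rw [hs, Finset.mem_filter] at hωs
        have hEv : Ev S v t ℓ ω := hωs.2
        rw [Fintype.mem_piFinset]
        intro l
        by_cases h : l ∈ L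
        · simp only [h, if_true, Finset.mem_singleton]
          rw [← hρω]; simp [ρ, h]
        · simp only [h, if_false]
          have := hEv.2 l h
          rw [hFaeq ω hρω] at this
          rw [badF, Finset.mem_filter]
          exact ⟨Finset.mem_univ _, this⟩
      have hfibcard : (s.filter (fun ω => ρ ω = a)).card ≤ c ^ (d - L.card) := by
        refine (Finset.card_le_card hsub).trans ?_
        rw [Fintype.card_piFinset]
        have : ∀ l : Fin d,
            ((if l ∈ L then ({a l} : Finset X)
              else badF (m := m) S (v t) Fa).card) = (if l ∈ Lᶜ then c else 1) := by
          intro l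
          by_cases h : l ∈ L <;> simp [h, hc]
        rw [Finset.prod_congr rfl (fun l _ => this l)]
        rw [Finset.prod_ite_mem, Finset.univ_inter, Finset.prod_const,
          Finset.card_compl]
        simp
      calc 2 ^ (d - k) * (s.filter (fun ω => ρ ω = a)).card
          ≤ 2 ^ (d - L.card) * c ^ (d - L.card) := by
            apply Nat.mul_le_mul
            · exact Nat.pow_le_pow_right (by norm_num) (by omega)
            · exact hfibcard
        _ = (2 * c) ^ (d - L.card) := by rw [mul_pow]
        _ ≤ B ^ (d - L.card) := Nat.pow_le_pow_left hbad _
    · rw [Finset.not_nonempty_iff_eq_empty] at hne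
      rw [hne]
      simp
  calc 2 ^ (d - k) * s.card
      = ∑ a ∈ A, 2 ^ (d - k) * (s.filter (fun ω => ρ ω = a)).card := by
        rw [hfib, Finset.mul_sum]
    _ ≤ ∑ a ∈ A, B ^ (d - L.card) := Finset.sum_le_sum hper
    _ = A.card * B ^ (d - L.card) := by rw [Finset.sum_const, smul_eq_mul]
    _ = B ^ L.card * B ^ (d - L.card) := by rw [hAcard]
    _ = B ^ d := by rw [← pow_add]; congr 1; omega

/-- There is a choice of layer partitions avoiding all bad events. -/
lemma exists_good (hk1 : 1 ≤ k) (S : ℕ) (hm : m = 4 * k * S) (hn1 : 1 ≤ n)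
    (hS : 1 ≤ S) (hnS : n ≤ k * S * S + 1)
    (hcount : n ^ k * (k * d ^ k) < 2 ^ (d - k)) :
    ∃ ω : Fin d → Fin n → Fin m,
      ∀ (v : Fin k → Fin n) (t : Fin k) (ℓ : Fin k → Fin d), ¬ Ev S v t ℓ ω := by
  classical
  by_contra hcon
  push_neg at hcon
  have hm0 : 0 < m := by rw [hm]; positivity
  set I := (Finset.univ :
    Finset ((Fin k → Fin n) × Fin k × (Fin k → Fin d))) with hI
  have hcover : (Finset.univ : Finset (Fin d → Fin n → Fin m)) ⊆
      I.biUnion (fun i => Finset.univ.filter (Ev S i.1 i.2.1 i.2.2)) := by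
    intro ω _
    obtain ⟨v, t, ℓ, hE⟩ := hcon ω
    exact Finset.mem_biUnion.mpr ⟨(v, t, ℓ), Finset.mem_univ _, by
      simp only [Finset.mem_filter]
      exact ⟨Finset.mem_univ _, hE⟩⟩
  have hcardΩ : (Finset.univ : Finset (Fin d → Fin n → Fin m)).card
      = (m ^ n) ^ d := by
    rw [Finset.card_univ]
    simp [Fintype.card_fun]
  have hIcard : I.card = n ^ k * (k * d ^ k) := by
    rw [hI, Finset.card_univ]
    simp [Fintype.card_fun]
  have h1 : (m ^ n) ^ d ≤ ∑ i ∈ I, (Finset.univ.filter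
      (Ev (m := m) S i.1 i.2.1 i.2.2)).card := by
    rw [← hcardΩ]
    exact (Finset.card_le_card hcover).trans Finset.card_biUnion_le
  have h2 : 2 ^ (d - k) * (m ^ n) ^ d
      ≤ ∑ i ∈ I, 2 ^ (d - k) * (Finset.univ.filter
        (Ev (m := m) S i.1 i.2.1 i.2.2)).card := by
    rw [← Finset.mul_sum]
    exact Nat.mul_le_mul_left _ h1
  have h3 : ∑ i ∈ I, 2 ^ (d - k) * (Finset.univ.filter
      (Ev (m := m) S i.1 i.2.1 i.2.2)).card ≤ I.card * (m ^ n) ^ d := by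
    calc ∑ i ∈ I, 2 ^ (d - k) * (Finset.univ.filter
        (Ev (m := m) S i.1 i.2.1 i.2.2)).card
        ≤ ∑ _i ∈ I, (m ^ n) ^ d := by
          apply Finset.sum_le_sum
          intro i _
          exact card_Ev hk1 S hm hn1 hS hnS i.1 i.2.1 i.2.2
      _ = I.card * (m ^ n) ^ d := by rw [Finset.sum_const, smul_eq_mul]
  have h4 : I.card * (m ^ n) ^ d < 2 ^ (d - k) * (m ^ n) ^ d := by
    have hpos : 0 < (m ^ n) ^ d := by positivity
    apply (Nat.mul_lt_mul_right hpos).mpr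
    rw [hIcard]; exact hcount
  omega

/-- The greedy assignment of layers to request slots. -/
lemma greedy (S : ℕ) (hd1 : 1 ≤ d) (ω : Fin d → Fin n → Fin m)
    (hgood : ∀ (v : Fin k → Fin n) (t : Fin k) (ℓ : Fin k → Fin d),
      ¬ Ev S v t ℓ ω)
    (v : Fin k → Fin n) :
    ∃ ℓ : Fin k → Fin d, Function.Injective ℓ ∧
      ∀ t : Fin k, (blk (ω (ℓ t)) (v t)).card ≤ S ∧
        ∀ j : Fin k, j < t →
          Disjoint (cls (ω (ℓ t)) (v t)) (blk (ω (ℓ j)) (v j)) := by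
  classical
  have main : ∀ c : ℕ, c ≤ k → ∃ ℓ : Fin k → Fin d,
      Set.InjOn ℓ {j : Fin k | (j : ℕ) < c} ∧
      ∀ t : Fin k, (t : ℕ) < c →
        ((blk (ω (ℓ t)) (v t)).card ≤ S ∧
          ∀ j : Fin k, j < t →
            Disjoint (cls (ω (ℓ t)) (v t)) (blk (ω (ℓ j)) (v j))) := by
    intro c
    induction c with
    | zero =>
      intro _
      exact ⟨fun _ => ⟨0, hd1⟩, by simp [Set.InjOn], by omega⟩
    | succ c ih =>
      intro hc1
      obtain ⟨ℓ, hinj, hcond⟩ := ih (by omega)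
      set t : Fin k := ⟨c, by omega⟩ with ht
      have hstep : ∃ l : Fin d, l ∉ lset t ℓ ∧
          (blk (ω l) (v t)).card ≤ S ∧
          Disjoint (cls (ω l) (v t)) (fset ω v t ℓ) := by
        by_contra hno
        push_neg at hno
        apply hgood v t ℓ
        constructor
        · intro j hj
          have : (j : ℕ) < c := hj
          exact (hcond j this).1
        · intro l hl
          by_cases hcard : (blk (ω l) (v t)).card ≤ S
          · right
            exact hno l hl hcard
          · left
            omega
      obtain ⟨l, hl1, hl2, hl3⟩ := hstep
      refine ⟨Function.update ℓ t l, ?_, ?_⟩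
      · intro j₁ hj₁ j₂ hj₂ heq
        simp only [Set.mem_setOf_eq] at hj₁ hj₂
        by_cases h1 : j₁ = t
        · by_cases h2 : j₂ = t
          · rw [h1, h2]
          · exfalso
            have hj₂c : (j₂ : ℕ) < c := by
              have : (j₂ : ℕ) ≠ c := fun h => h2 (Fin.ext h)
              omega
            rw [h1, Function.update_self, Function.update_of_ne h2] at heq
            apply hl1
            rw [heq]
            exact Finset.mem_image_of_mem ℓ (by
              simp only [Finset.mem_filter, Finset.mem_univ, true_and]
              exact hj₂c)
        · by_cases h2 : j₂ = t
          · exfalso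
            have hj₁c : (j₁ : ℕ) < c := by
              have : (j₁ : ℕ) ≠ c := fun h => h1 (Fin.ext h)
              omega
            rw [h2, Function.update_self, Function.update_of_ne h1] at heq
            apply hl1
            rw [← heq]
            exact Finset.mem_image_of_mem ℓ (by
              simp only [Finset.mem_filter, Finset.mem_univ, true_and]
              exact hj₁c)
          · have hj₁c : (j₁ : ℕ) < c := by
              have : (j₁ : ℕ) ≠ c := fun h => h1 (Fin.ext h)
              omega
            have hj₂c : (j₂ : ℕ) < c := by
              have : (j₂ : ℕ) ≠ c := fun h => h2 (Fin.ext h)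
              omega
            rw [Function.update_of_ne h1, Function.update_of_ne h2] at heq
            exact hinj hj₁c hj₂c heq
      · intro t' ht'
        by_cases h1 : t' = t
        · subst h1
          rw [Function.update_self]
          refine ⟨hl2, ?_⟩
          intro j hj
          have hjc : (j : ℕ) < c := hj
          have hct : (t : ℕ) = c := rfl
          have hjt : j ≠ t := by
            intro h; rw [h] at hjc; omega
          rw [Function.update_of_ne hjt]
          apply Finset.disjoint_of_subset_right _ hl3
          apply Finset.subset_biUnion_of_mem (fun j => blk (ω (ℓ j)) (v j))
          simp only [Finset.mem_filter, Finset.mem_univ, true_and]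
          exact hj
        · have ht'c : (t' : ℕ) < c := by
            have : (t' : ℕ) ≠ c := fun h => h1 (Fin.ext h)
            omega
          rw [Function.update_of_ne h1]
          refine ⟨(hcond t' ht'c).1, ?_⟩
          intro j hj
          have hjc : (j : ℕ) < c := by
            have : (j : ℕ) < (t' : ℕ) := hj
            omega
          have hct : (t : ℕ) = c := rfl
          have hjt : j ≠ t := by
            intro h; rw [h] at hjc; omega
          rw [Function.update_of_ne hjt]
          exact (hcond t' ht'c).2 j hj
  obtain ⟨ℓ, hinj, hcond⟩ := main k le_rfl
  refine ⟨ℓ, ?_, ?_⟩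
  · intro a b hab
    exact hinj (a.isLt) (b.isLt) hab
  · intro t
    exact hcond t t.isLt

end Event

section Code

variable {k d : ℕ}

/-- parity part of the encoding -/
def par (ω : Fin d → Fin n → Fin m) (x : Fin n → ZMod 2) (j : Fin (d * m)) :
    ZMod 2 :=
  ∑ u ∈ Finset.univ.filter
      (fun u => ω (finProdFinEquiv.symm j).1 u = (finProdFinEquiv.symm j).2),
    x u

/-- the encoding map -/
def encMap (ω : Fin d → Fin n → Fin m) :
    (Fin n → ZMod 2) →ₗ[ZMod 2] (Fin (n + d * m) → ZMod 2) where
  toFun x := Fin.append x (par ω x)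
  map_add' x y := by
    funext i
    refine Fin.addCases (fun i₀ => ?_) (fun j₀ => ?_) i
    · simp [Fin.append_left]
    · simp [Fin.append_right, par, Finset.sum_add_distrib]
  map_smul' c x := by
    funext i
    refine Fin.addCases (fun i₀ => ?_) (fun j₀ => ?_) i
    · simp [Fin.append_left]
    · simp [Fin.append_right, par, Finset.mul_sum, smul_eq_mul]

lemma batch_of_assignment (S : ℕ) (ω : Fin d → Fin n → Fin m)
    (hserve : ∀ v : Fin k → Fin n, ∃ ℓ : Fin k → Fin d,
      Function.Injective ℓ ∧
      ∀ t : Fin k, (blk (ω (ℓ t)) (v t)).card ≤ S ∧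
        ∀ j : Fin k, j < t →
          Disjoint (cls (ω (ℓ t)) (v t)) (blk (ω (ℓ j)) (v j))) :
    IsBatchCode (n + d * m) n k (encMap ω) := by
  classical
  constructor
  · intro x y hxy
    funext u
    have := congrFun hxy (Fin.castAdd (d * m) u)
    simpa [encMap, Fin.append_left] using this
  · intro rq
    obtain ⟨ℓ, hinj, hcond⟩ := hserve rq
    set pidx : Fin k → Fin (n + d * m) :=
      fun t => Fin.natAdd n (finProdFinEquiv (ℓ t, ω (ℓ t) (rq t))) with hpidx
    set cmap : Fin k → Finset (Fin (n + d * m)) :=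
      fun t => (cls (ω (ℓ t)) (rq t)).map (Fin.castAddEmb (d * m)) with hcmap
    have hnotmem : ∀ t s : Fin k, pidx t ∉ cmap s := by
      intro t s hmem
      rw [hcmap, Finset.mem_map] at hmem
      obtain ⟨u, _, hu⟩ := hmem
      have h1 : ((Fin.castAddEmb (d * m)) u : ℕ) = (u : ℕ) := rfl
      have h2 : ((pidx t : Fin (n + d * m)) : ℕ) =
          n + (finProdFinEquiv (ℓ t, ω (ℓ t) (rq t)) : ℕ) := rfl
      rw [← hu] at h2
      rw [h1] at h2
      omega
    refine ⟨fun t => insert (pidx t) (cmap t), ?_, ?_⟩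
    · intro t₁ t₂ hne
      have hp : pidx t₁ ≠ pidx t₂ := by
        intro h
        apply hne
        have hv : (pidx t₁ : ℕ) = (pidx t₂ : ℕ) := by rw [h]
        have h1 : (finProdFinEquiv (ℓ t₁, ω (ℓ t₁) (rq t₁)) : ℕ) =
            (finProdFinEquiv (ℓ t₂, ω (ℓ t₂) (rq t₂)) : ℕ) := by
          have e1 : (pidx t₁ : ℕ) = n + _ := rfl
          have e2 : (pidx t₂ : ℕ) = n + _ := rfl
          omega
        have h2 : finProdFinEquiv (ℓ t₁, ω (ℓ t₁) (rq t₁)) =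
            finProdFinEquiv (ℓ t₂, ω (ℓ t₂) (rq t₂)) := Fin.ext h1
        have h3 := finProdFinEquiv.injective h2
        have h4 : ℓ t₁ = ℓ t₂ := congrArg Prod.fst h3
        exact hinj h4
      have hcls : Disjoint (cmap t₁) (cmap t₂) := by
        rw [hcmap, Finset.disjoint_map]
        rcases lt_or_gt_of_ne hne with h | h
        · apply Finset.disjoint_of_subset_left (Finset.erase_subset _ _)
          exact ((hcond t₂).2 t₁ h).symm
        · exact Finset.disjoint_of_subset_right (Finset.erase_subset _ _)
            ((hcond t₁).2 t₂ h)
      rw [Finset.disjoint_insert_left, Finset.disjoint_insert_right]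
      exact ⟨by simp [hp, hnotmem t₁ t₂], hnotmem t₂ t₁, hcls⟩
    · intro x t
      rw [Finset.sum_insert (hnotmem t t)]
      have h1 : (encMap ω) x (pidx t) = ∑ u ∈ blk (ω (ℓ t)) (rq t), x u := by
        show Fin.append x (par ω x) (Fin.natAdd n _) = _
        rw [Fin.append_right, par]
        simp only [Equiv.symm_apply_apply]
        rfl
      have h2 : ∑ p ∈ cmap t, (encMap ω) x p
          = ∑ u ∈ cls (ω (ℓ t)) (rq t), x u := by
        rw [hcmap, Finset.sum_map]
        apply Finset.sum_congr rfl
        intro u _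
        show Fin.append x (par ω x) (Fin.castAdd (d * m) u) = x u
        rw [Fin.append_left]
      rw [h1, h2]
      have h3 : ∑ u ∈ blk (ω (ℓ t)) (rq t), x u
          = x (rq t) + ∑ u ∈ cls (ω (ℓ t)) (rq t), x u := by
        rw [cls, ← Finset.add_sum_erase _ x (mem_blk_self (ω (ℓ t)) (rq t))]
      rw [h3]
      have h4 : ∀ a c : ZMod 2, a = (a + c) + c := by decide
      exact h4 _ _

end Code

lemma nat_hnS (n k : ℕ) (hk1 : 1 ≤ k) :
    n ≤ k * (Nat.sqrt (n / k) + 1) * (Nat.sqrt (n / k) + 1) + 1 := by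
  set S := Nat.sqrt (n / k) + 1 with hS
  have h1 : n / k < S * S := Nat.lt_succ_sqrt (n / k)
  have h2 : k * (n / k) + n % k = n := Nat.div_add_mod n k
  have h3 : n % k < k := Nat.mod_lt n hk1
  have h4 : k * (n / k + 1) ≤ k * (S * S) := by
    apply Nat.mul_le_mul_left
    omega
  have h5 : k * (n / k + 1) = k * (n / k) + k := by ring
  have h6 : k * (S * S) = k * S * S := by ring
  omega

lemma nat_hcount (n k : ℕ) (hk1 : 1 ≤ k) (hkn : k ≤ n)
    (hdn : 10 * k * (Nat.log 2 n + 1) ≤ n) :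
    n ^ k * (k * (10 * k * (Nat.log 2 n + 1)) ^ k)
      < 2 ^ (10 * k * (Nat.log 2 n + 1) - k) := by
  set a := Nat.log 2 n + 1 with ha
  set d := 10 * k * a with hd
  have ha1 : 1 ≤ a := by omega
  have hnlt : n < 2 ^ a := Nat.lt_pow_succ_log_self (by norm_num) n
  have hdle : d ≤ n := hdn
  have step1 : n ^ k * (k * d ^ k) ≤ n ^ k * (n * n ^ k) := by
    apply Nat.mul_le_mul_left
    exact Nat.mul_le_mul hkn (Nat.pow_le_pow_left hdle k)
  have step1' : n ^ k * (n * n ^ k) = n ^ (2 * k + 1) := by ring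
  have step2 : n ^ (2 * k + 1) < (2 ^ a) ^ (2 * k + 1) :=
    Nat.pow_lt_pow_left hnlt (by omega)
  have step2' : (2 ^ a) ^ (2 * k + 1) = 2 ^ (a * (2 * k + 1)) := by
    rw [← pow_mul]
  have hexp : a * (2 * k + 1) + k ≤ d := by
    have h1 : a ≤ k * a := Nat.le_mul_of_pos_left a (by omega)
    have h2 : k ≤ k * a := Nat.le_mul_of_pos_right k (by omega)
    have h3 : a * (2 * k + 1) = 2 * (k * a) + a := by ring
    have h4 : d = 10 * (k * a) := by rw [hd]; ring
    omega
  have step3 : 2 ^ (a * (2 * k + 1)) ≤ 2 ^ (d - k) :=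
    Nat.pow_le_pow_right (by norm_num) (by omega)
  calc n ^ k * (k * d ^ k) ≤ n ^ k * (n * n ^ k) := step1
    _ = n ^ (2 * k + 1) := step1'
    _ < (2 ^ a) ^ (2 * k + 1) := step2
    _ = 2 ^ (a * (2 * k + 1)) := step2'
    _ ≤ 2 ^ (d - k) := step3

lemma nat_hkd (n k : ℕ) (hk1 : 1 ≤ k) : k ≤ 10 * k * (Nat.log 2 n + 1) := by
  have h1 : k * 1 ≤ k * (10 * (Nat.log 2 n + 1)) := by
    apply Nat.mul_le_mul_left
    omega
  have h2 : k * (10 * (Nat.log 2 n + 1)) = 10 * k * (Nat.log 2 n + 1) := by ring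
  omega

lemma log_ge_one {n : ℕ} (hn : 3 ≤ n) : 1 ≤ Real.log n := by
  have h1 : Real.exp 1 ≤ (n : ℝ) := by
    have := Real.exp_one_lt_d9
    have hn' : (3 : ℝ) ≤ (n : ℝ) := by exact_mod_cast hn
    nlinarith
  calc (1 : ℝ) = Real.log (Real.exp 1) := (Real.log_exp 1).symm
    _ ≤ Real.log n := Real.log_le_log (Real.exp_pos 1) h1

lemma natlog_le {n : ℕ} (hn : 3 ≤ n) : (Nat.log 2 n : ℝ) ≤ 2 * Real.log n := by
  have h1 : (2 : ℕ) ^ (Nat.log 2 n) ≤ n := Nat.pow_log_le_self 2 (by omega)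
  have h2 : ((2 : ℝ)) ^ (Nat.log 2 n) ≤ (n : ℝ) := by exact_mod_cast h1
  have h3 : (Nat.log 2 n : ℝ) * Real.log 2 ≤ Real.log n := by
    rw [← Real.log_pow]
    apply Real.log_le_log (by positivity) h2
  have h4 := Real.log_two_gt_d9
  nlinarith [(Nat.cast_nonneg (Nat.log 2 n) : (0:ℝ) ≤ (Nat.log 2 n : ℝ)), log_ge_one hn]

lemma sqrt_cast_le (a : ℕ) : (Nat.sqrt a : ℝ) ≤ Real.sqrt a := by
  have h1 : Nat.sqrt a ^ 2 ≤ a := Nat.sqrt_le' a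
  have h2 : ((Nat.sqrt a : ℝ)) ^ 2 ≤ (a : ℝ) := by exact_mod_cast h1
  calc (Nat.sqrt a : ℝ) = Real.sqrt (((Nat.sqrt a : ℝ)) ^ 2) :=
        (Real.sqrt_sq (by positivity)).symm
    _ ≤ Real.sqrt a := Real.sqrt_le_sqrt h2

lemma real_bound (n k : ℕ) (hk1 : 1 ≤ k) (hkn : k ≤ n) (hn3 : 3 ≤ n) :
    (((10 * k * (Nat.log 2 n + 1)) * (4 * k * (Nat.sqrt (n / k) + 1)) : ℕ) : ℝ)
      ≤ 240 * (k : ℝ) ^ ((3 : ℝ) / 2) * Real.sqrt n * Real.log n := by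
  have hk0 : (0 : ℝ) < k := by exact_mod_cast hk1
  have hn0 : (0 : ℝ) < n := by positivity
  have hlog := log_ge_one hn3
  have hL := natlog_le hn3
  have hd : ((10 * k * (Nat.log 2 n + 1) : ℕ) : ℝ) ≤ 30 * k * Real.log n := by
    push_cast
    nlinarith [hk0.le]
  have hsq : (Nat.sqrt (n / k) : ℝ) ≤ Real.sqrt n / Real.sqrt k := by
    have h1 : (Nat.sqrt (n / k) : ℝ) ≤ Real.sqrt ((n / k : ℕ) : ℝ) :=
      sqrt_cast_le _
    have h2 : ((n / k : ℕ) : ℝ) ≤ (n : ℝ) / k := Nat.cast_div_le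
    have h3 : Real.sqrt ((n / k : ℕ) : ℝ) ≤ Real.sqrt ((n : ℝ) / k) :=
      Real.sqrt_le_sqrt h2
    rw [← Real.sqrt_div hn0.le]
    exact h1.trans h3
  have hsk : Real.sqrt k ≤ Real.sqrt n := by
    apply Real.sqrt_le_sqrt
    exact_mod_cast hkn
  have hsk0 : (0 : ℝ) < Real.sqrt k := Real.sqrt_pos.mpr hk0
  have hksqrt : (k : ℝ) * (Real.sqrt n / Real.sqrt k)
      = Real.sqrt k * Real.sqrt n := by
    have h := Real.mul_self_sqrt hk0.le
    rw [← mul_div_assoc, div_eq_iff hsk0.ne']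
    linear_combination (-1 : ℝ) * Real.sqrt (n : ℝ) * h
  have hm : ((4 * k * (Nat.sqrt (n / k) + 1) : ℕ) : ℝ)
      ≤ 8 * Real.sqrt k * Real.sqrt n := by
    push_cast
    have h4 : (k : ℝ) * (Nat.sqrt (n / k) : ℝ) ≤ Real.sqrt k * Real.sqrt n := by
      calc (k : ℝ) * (Nat.sqrt (n / k) : ℝ)
          ≤ (k : ℝ) * (Real.sqrt n / Real.sqrt k) := by
            apply mul_le_mul_of_nonneg_left hsq hk0.le
        _ = Real.sqrt k * Real.sqrt n := hksqrt
    have h5 : (k : ℝ) ≤ Real.sqrt k * Real.sqrt n := by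
      calc (k : ℝ) = Real.sqrt k * Real.sqrt k := (Real.mul_self_sqrt hk0.le).symm
        _ ≤ Real.sqrt k * Real.sqrt n :=
            mul_le_mul_of_nonneg_left hsk hsk0.le
    nlinarith
  have hk32 : (k : ℝ) ^ ((3 : ℝ) / 2) = (k : ℝ) * Real.sqrt k := by
    rw [Real.sqrt_eq_rpow]
    rw [show (3 : ℝ) / 2 = 1 + 1 / 2 by norm_num, Real.rpow_add hk0,
      Real.rpow_one]
  have hfin := mul_le_mul hd hm (by positivity) (by positivity)
  rw [Nat.cast_mul]
  refine hfin.trans (le_of_eq ?_)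
  rw [hk32]; ring

lemma eventually_good (k : ℕ → ℕ)
    (hk : Filter.Tendsto
      (fun n : ℕ => (k n : ℝ) * Real.log n / (n : ℝ) ^ ((1 : ℝ) / 3))
      Filter.atTop (nhds 0)) :
    ∃ n₀ : ℕ, ∀ n, n₀ ≤ n → 1 ≤ k n →
      (3 ≤ n ∧ k n ≤ n ∧ 10 * k n * (Nat.log 2 n + 1) ≤ n) := by
  have h1 : ∀ᶠ n : ℕ in atTop,
      (k n : ℝ) * Real.log n / (n : ℝ) ^ ((1 : ℝ) / 3) < 1 / 2 :=
    hk.eventually_lt_const (by norm_num)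
  have h2 : ∀ᶠ n : ℕ in atTop, 3375 ≤ n := eventually_ge_atTop 3375
  obtain ⟨n₀, hn₀⟩ := Filter.eventually_atTop.mp (h1.and h2)
  refine ⟨n₀, ?_⟩
  intro n hn hk1
  obtain ⟨hhalf, hn3375⟩ := hn₀ n hn
  have hn3 : 3 ≤ n := by omega
  have hnR : (3375 : ℝ) ≤ (n : ℝ) := by exact_mod_cast hn3375
  have hn0 : (0 : ℝ) < n := by linarith
  set y := (n : ℝ) ^ ((1 : ℝ) / 3) with hy
  have hypos : 0 < y := Real.rpow_pos_of_pos hn0 _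
  have hklog : (k n : ℝ) * Real.log n < (1 / 2) * y := by
    rw [div_lt_iff₀ hypos] at hhalf
    linarith
  have hlog := log_ge_one hn3
  have hkcast : (1 : ℝ) ≤ (k n : ℝ) := by exact_mod_cast hk1
  have hk13 : (k n : ℝ) ≤ (1 / 2) * y := by
    nlinarith
  have hy15 : (15 : ℝ) ≤ y := by
    have hc : ((3375 : ℝ)) ^ ((1 : ℝ) / 3) ≤ (n : ℝ) ^ ((1 : ℝ) / 3) :=
      Real.rpow_le_rpow (by norm_num) hnR (by norm_num)
    have hc2 : ((3375 : ℝ)) ^ ((1 : ℝ) / 3) = 15 := by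
      have h15 : (3375 : ℝ) = (15 : ℝ) ^ (3 : ℕ) := by norm_num
      rw [h15, ← Real.rpow_natCast (15 : ℝ) 3, ← Real.rpow_mul (by norm_num)]
      norm_num
    rw [← hc2]
    exact hc
  have ha : 15 * y ≤ y * y := mul_le_mul_of_nonneg_right hy15 hypos.le
  have hb : 15 * (y * y) ≤ y * (y * y) :=
    mul_le_mul_of_nonneg_right hy15 (by positivity)
  have hy3 : 15 * y ≤ y ^ 3 := by nlinarith [ha, hb, hypos]
  have hyn : y ^ (3 : ℕ) = (n : ℝ) := by
    rw [hy, ← Real.rpow_natCast ((n : ℝ) ^ ((1 : ℝ) / 3)) 3,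
      ← Real.rpow_mul hn0.le]
    norm_num
  have hkn : k n ≤ n := by
    have : (k n : ℝ) ≤ (n : ℝ) := by nlinarith [hy3, hypos]
    exact_mod_cast this
  have hdn : 10 * k n * (Nat.log 2 n + 1) ≤ n := by
    have hL := natlog_le hn3
    have hkpos : (0 : ℝ) ≤ (k n : ℝ) := by positivity
    have hr : ((10 * k n * (Nat.log 2 n + 1) : ℕ) : ℝ) ≤ (n : ℝ) := by
      push_cast
      have s1 : (10 : ℝ) * (k n) * ((Nat.log 2 n : ℝ) + 1)
          ≤ 10 * (k n) * (3 * Real.log n) := by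
        have : (Nat.log 2 n : ℝ) + 1 ≤ 3 * Real.log n := by linarith
        nlinarith
      have s2 : (10 : ℝ) * (k n) * (3 * Real.log n) = 30 * ((k n) * Real.log n) := by
        ring
      have s3 : (30 : ℝ) * ((k n) * Real.log n) ≤ 30 * ((1 / 2) * y) := by
        nlinarith
      have s4 : (30 : ℝ) * ((1 / 2) * y) = 15 * y := by ring
      have s5 : (15 : ℝ) * y ≤ (n : ℝ) := by
        rw [← hyn]; exact hy3
      linarith
    exact_mod_cast hr
  exact ⟨hn3, hkn, hdn⟩


/-- Putting the combinatorial pieces together. -/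
lemma exists_code (n k : ℕ) (hk1 : 1 ≤ k) (hn3 : 3 ≤ n) (hkn : k ≤ n)
    (hdn : 10 * k * (Nat.log 2 n + 1) ≤ n) :
    ∃ enc : (Fin n → ZMod 2) →ₗ[ZMod 2]
        (Fin (n + (10 * k * (Nat.log 2 n + 1)) * (4 * k * (Nat.sqrt (n / k) + 1)))
          → ZMod 2),
      IsBatchCode
        (n + (10 * k * (Nat.log 2 n + 1)) * (4 * k * (Nat.sqrt (n / k) + 1)))
        n k enc := by
  obtain ⟨ω, hω⟩ := exists_good (n := n)
    (m := 4 * k * (Nat.sqrt (n / k) + 1)) (k := k)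
    (d := 10 * k * (Nat.log 2 n + 1)) hk1 (Nat.sqrt (n / k) + 1) rfl
    (by omega) (by omega) (nat_hnS n k hk1) (nat_hcount n k hk1 hkn hdn)
  have hd1 : 1 ≤ 10 * k * (Nat.log 2 n + 1) := le_trans hk1 (nat_hkd n k hk1)
  exact ⟨encMap ω, batch_of_assignment (Nat.sqrt (n / k) + 1) ω
    (greedy (Nat.sqrt (n / k) + 1) hd1 ω hω)⟩

end BatchAux

/-- Random construction of batch codes: if `k(n) log n / n^{1/3} → 0`, then for
all sufficiently large squares of prime powers `n = q²` there is a binary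
primitive `k(n)`-batch code of dimension `n` with redundancy
`O(k(n)^{3/2} √n log n)`. -/
theorem random_construction_of_batch_codes (k : ℕ → ℕ)
    (hk : Filter.Tendsto
      (fun n : ℕ => (k n : ℝ) * Real.log n / (n : ℝ) ^ ((1 : ℝ) / 3))
      Filter.atTop (nhds 0)) :
    ∃ C : ℝ, 0 < C ∧ ∃ n₀ : ℕ, ∀ q n : ℕ, IsPrimePow q → n = q ^ 2 → n₀ ≤ n →
      1 ≤ k n →
      ∃ r : ℕ,
        (r : ℝ) ≤ C * (k n : ℝ) ^ ((3 : ℝ) / 2) * Real.sqrt n * Real.log n ∧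
        ∃ enc : (Fin n → ZMod 2) →ₗ[ZMod 2] (Fin (n + r) → ZMod 2),
          IsBatchCode (n + r) n (k n) enc := by
  obtain ⟨n₀, hn₀⟩ := BatchAux.eventually_good k hk
  refine ⟨240, by norm_num, n₀, ?_⟩
  intro q n _ _ hn hk1
  obtain ⟨hn3, hkn, hdn⟩ := hn₀ n hn hk1
  refine ⟨(10 * k n * (Nat.log 2 n + 1)) * (4 * k n * (Nat.sqrt (n / k n) + 1)),
    ?_, ?_⟩
  · exact BatchAux.real_bound n (k n) hk1 hkn hn3
  · exact BatchAux.exists_code n (k n) hk1 hn3 hkn hdn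
end

section
/- Let q be a prime power, ℓ ≥ 1, L ≥ 1 and m ≥ 1 be integers. If there exists an L-nice collection {V_1,…,V_m} of ℓ-dimensional subspaces of 𝔽_q^{2ℓ+1}, then there exists a binary primitive linear [q^{2ℓ+1} + m·q^{ℓ+1}, q^{2ℓ+1}, ⌊m/L⌋]^B batch code. -/
/-- An `L`-nice collection of `ℓ`-dimensional subspaces of `F^{2ℓ+1}`:
all subspaces are `ℓ`-dimensional, any two distinct members intersect
trivially, and every coset `v + Vᵢ` with `v ∉ Vᵢ` meets at most `L` members
of the collection. -/
def IsNice (F : Type*) [Field F] (ℓ L : ℕ) {m : ℕ}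
    (V : Fin m → Submodule F (Fin (2 * ℓ + 1) → F)) : Prop :=
  (∀ i, Module.finrank F (V i) = ℓ) ∧
  (∀ i j : Fin m, i ≠ j → V i ⊓ V j = ⊥) ∧
  (∀ (i : Fin m) (v : Fin (2 * ℓ + 1) → F), v ∉ V i →
    Nat.card {j : Fin m // ∃ w ∈ V i, v + w ∈ V j} ≤ L)


attribute [local instance] Classical.propDecidable

noncomputable section BatchAux

variable {F : Type} [Field F] [Fintype F] {ℓ m : ℕ}

/-- conflict between recovery set of `u` via `V i` and of `u'` via `V j`. -/
def BConflict (V : Fin m → Submodule F (Fin (2 * ℓ + 1) → F))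
    (u : Fin (2 * ℓ + 1) → F) (i : Fin m) (u' : Fin (2 * ℓ + 1) → F) (j : Fin m) : Prop :=
  (i = j ∧ u - u' ∈ V i) ∨
    ∃ w : Fin (2 * ℓ + 1) → F, w - u ∈ V i ∧ w - u' ∈ V j ∧ w ≠ u ∧ w ≠ u'

def BBad (V : Fin m → Submodule F (Fin (2 * ℓ + 1) → F))
    (u : Fin (2 * ℓ + 1) → F) (i : Fin m) (u' : Fin (2 * ℓ + 1) → F) : Finset (Fin m) :=
  if u - u' ∈ V i then {i}
  else Finset.univ.filter (fun j => ∃ w ∈ V i, (u - u') + w ∈ V j)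

theorem BConflict.symm {V : Fin m → Submodule F (Fin (2 * ℓ + 1) → F)}
    {u u' : Fin (2 * ℓ + 1) → F} {i j : Fin m}
    (h : BConflict V u i u' j) : BConflict V u' j u i := by
  rcases h with ⟨rfl, h⟩ | ⟨w, h1, h2, h3, h4⟩
  · exact Or.inl ⟨rfl, by simpa using (V i).neg_mem h⟩
  · exact Or.inr ⟨w, h2, h1, h4, h3⟩

theorem bbad_card {V : Fin m → Submodule F (Fin (2 * ℓ + 1) → F)} {L : ℕ}
    (hL : 1 ≤ L) (hnice : IsNice F ℓ L V) (u : Fin (2 * ℓ + 1) → F) (i : Fin m)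
    (u' : Fin (2 * ℓ + 1) → F) : (BBad V u i u').card ≤ L := by
  unfold BBad
  split_ifs with h
  · rw [Finset.card_singleton]; exact hL
  · have := hnice.2.2 i (u - u') h
    rwa [Nat.card_eq_fintype_card, Fintype.card_subtype] at this

theorem mem_bbad_of_conflict {V : Fin m → Submodule F (Fin (2 * ℓ + 1) → F)} {L : ℕ}
    (hnice : IsNice F ℓ L V) {u u' : Fin (2 * ℓ + 1) → F} {i j : Fin m}
    (h : BConflict V u i u' j) : j ∈ BBad V u i u' := by
  unfold BBad
  split_ifs with hc
  · -- same coset: show j = i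
    rcases h with ⟨rfl, _⟩ | ⟨w, h1, h2, h3, h4⟩
    · exact Finset.mem_singleton_self _
    · by_contra hji
      have hij : i ≠ j := by
        intro hij; exact (hji (by simp [Finset.mem_singleton, hij.symm]))
      have hmem : w - u' ∈ V i := by
        have : (w - u) + (u - u') ∈ V i := (V i).add_mem h1 hc
        simpa [sub_add_sub_cancel] using this
      have : w - u' ∈ V i ⊓ V j := ⟨hmem, h2⟩
      rw [hnice.2.1 i j hij] at this
      simp only [Submodule.mem_bot, sub_eq_zero] at this
      exact h4 this
  · rcases h with ⟨rfl, h⟩ | ⟨w, h1, h2, h3, h4⟩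
    · exact absurd h hc
    · refine Finset.mem_filter.2 ⟨Finset.mem_univ _, ⟨w - u, h1, ?_⟩⟩
      have : (u - u') + (w - u) = w - u' := by ring
      rwa [this]

theorem greedy {V : Fin m → Submodule F (Fin (2 * ℓ + 1) → F)} {L : ℕ}
    (hL : 1 ≤ L) (hm : 1 ≤ m) (hnice : IsNice F ℓ L V) {k : ℕ} (hk : k * L ≤ m)
    (u : Fin k → (Fin (2 * ℓ + 1) → F)) :
    ∃ i : Fin k → Fin m, ∀ s t : Fin k, s ≠ t →
      ¬ BConflict V (u s) (i s) (u t) (i t) := by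
  suffices H : ∀ n ≤ k, ∃ i : Fin k → Fin m, ∀ s t : Fin k, s < t → (t : ℕ) < n →
      ¬ BConflict V (u s) (i s) (u t) (i t) by
    obtain ⟨i, hi⟩ := H k le_rfl
    refine ⟨i, fun s t hst hc => ?_⟩
    rcases lt_or_gt_of_ne hst with h | h
    · exact hi s t h t.isLt hc
    · exact hi t s h s.isLt hc.symm
  intro n hn
  induction n with
  | zero => exact ⟨fun _ => ⟨0, hm⟩, fun s t _ ht => absurd ht (Nat.not_lt_zero _)⟩
  | succ n ih =>
    obtain ⟨i, hi⟩ := ih (Nat.le_of_succ_le hn)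
    have hnk : n < k := hn
    set tn : Fin k := ⟨n, hnk⟩ with htn
    set B : Finset (Fin m) :=
      (Finset.univ.filter (fun s : Fin k => (s : ℕ) < n)).biUnion
        (fun s => BBad V (u s) (i s) (u tn)) with hB
    have hcard : B.card < m := by
      have h1 : B.card ≤ (Finset.univ.filter (fun s : Fin k => (s : ℕ) < n)).card * L := by
        refine le_trans (Finset.card_biUnion_le) ?_
        rw [Finset.card_eq_sum_ones, Finset.sum_mul, one_mul]
        exact Finset.sum_le_sum (fun s _ => bbad_card hL hnice _ _ _)
      have h2 : (Finset.univ.filter (fun s : Fin k => (s : ℕ) < n)).card ≤ n := by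
        have : (Finset.univ.filter (fun s : Fin k => (s : ℕ) < n)).card =
            ((Finset.univ.filter (fun s : Fin k => (s : ℕ) < n)).image Fin.val).card := by
          rw [Finset.card_image_of_injective _ Fin.val_injective]
        rw [this]
        refine le_trans (Finset.card_le_card ?_) (Finset.card_range n).le
        intro a ha
        simp only [Finset.mem_image, Finset.mem_filter] at ha
        obtain ⟨s, ⟨_, hs⟩, rfl⟩ := ha
        exact Finset.mem_range.2 hs
      calc B.card ≤ n * L := le_trans h1 (Nat.mul_le_mul_right _ h2)
        _ < n * L + L := by omega
        _ = (n + 1) * L := by ring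
        _ ≤ k * L := Nat.mul_le_mul_right _ hn
        _ ≤ m := hk
    have hex : ∃ j : Fin m, j ∉ B := by
      by_contra hc
      push_neg at hc
      have : (Finset.univ : Finset (Fin m)) ⊆ B := fun j _ => hc j
      have := Finset.card_le_card this
      simp only [Finset.card_univ, Fintype.card_fin] at this
      omega
    obtain ⟨j, hj⟩ := hex
    refine ⟨Function.update i tn j, fun s t hst ht hc => ?_⟩
    have hsn : (s : ℕ) < n := by
      have : (s : ℕ) < (t : ℕ) := hst
      omega
    have hs' : s ≠ tn := by
      intro h; rw [h] at hsn; simp [htn] at hsn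
    rcases Nat.lt_or_ge (t : ℕ) n with htn' | htn'
    · have ht' : t ≠ tn := by
        intro h; rw [h] at htn'; simp [htn] at htn'
      rw [Function.update_of_ne hs', Function.update_of_ne ht'] at hc
      exact hi s t hst htn' hc
    · have ht' : t = tn := by
        apply Fin.ext; simp [htn]; omega
      subst ht'
      rw [Function.update_of_ne hs', Function.update_self] at hc
      exact hj (Finset.mem_biUnion.2 ⟨s, Finset.mem_filter.2 ⟨Finset.mem_univ _, hsn⟩,
        mem_bbad_of_conflict hnice hc⟩)

end BatchAux


/-- From an `L`-nice collection of `m` subspaces of `𝔽_q^{2ℓ+1}` one obtains a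
binary primitive `[q^{2ℓ+1} + m q^{ℓ+1}, q^{2ℓ+1}, ⌊m/L⌋]` batch code. -/
theorem batch_code_of_nice_collection (q ℓ L m : ℕ) (hℓ : 1 ≤ ℓ) (hL : 1 ≤ L)
    (hm : 1 ≤ m) (F : Type) [Field F] [Fintype F] (hq : Fintype.card F = q)
    (V : Fin m → Submodule F (Fin (2 * ℓ + 1) → F))
    (hnice : IsNice F ℓ L V) :
    ∃ enc : (Fin (q ^ (2 * ℓ + 1)) → ZMod 2) →ₗ[ZMod 2]
        (Fin (q ^ (2 * ℓ + 1) + m * q ^ (ℓ + 1)) → ZMod 2),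
      IsBatchCode (q ^ (2 * ℓ + 1) + m * q ^ (ℓ + 1)) (q ^ (2 * ℓ + 1)) (m / L)
        enc := by
  classical
  -- the point space
  have hcardP : Fintype.card (Fin (2 * ℓ + 1) → F) = q ^ (2 * ℓ + 1) := by
    simp [Fintype.card_fun, hq]
  let e : (Fin (2 * ℓ + 1) → F) ≃ Fin (q ^ (2 * ℓ + 1)) :=
    Fintype.equivFinOfCardEq hcardP
  -- quotient spaces
  haveI : ∀ i : Fin m, Fintype ((Fin (2 * ℓ + 1) → F) ⧸ V i) :=
    fun i => Fintype.ofFinite _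
  have hfinP : Module.finrank F (Fin (2 * ℓ + 1) → F) = 2 * ℓ + 1 := by
    simpa using Module.finrank_fin_fun F (n := 2 * ℓ + 1)
  have hQcard : ∀ i : Fin m,
      Fintype.card ((Fin (2 * ℓ + 1) → F) ⧸ V i) = q ^ (ℓ + 1) := by
    intro i
    have h1 := Submodule.finrank_quotient_add_finrank (V i)
    rw [hfinP, hnice.1 i] at h1
    have h2 : Module.finrank F ((Fin (2 * ℓ + 1) → F) ⧸ V i) = ℓ + 1 := by omega
    rw [Module.card_eq_pow_finrank (K := F), h2, hq]
  -- the index type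
  have hIdx : Fintype.card
      ((Fin (2 * ℓ + 1) → F) ⊕ (Σ i : Fin m, (Fin (2 * ℓ + 1) → F) ⧸ V i)) =
      q ^ (2 * ℓ + 1) + m * q ^ (ℓ + 1) := by
    rw [Fintype.card_sum, Fintype.card_sigma, hcardP]
    simp [hQcard, Finset.sum_const, mul_comm]
  let ι : Fin (q ^ (2 * ℓ + 1) + m * q ^ (ℓ + 1)) ≃
      ((Fin (2 * ℓ + 1) → F) ⊕ (Σ i : Fin m, (Fin (2 * ℓ + 1) → F) ⧸ V i)) :=
    (Fintype.equivFinOfCardEq hIdx).symm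
  -- the core linear map
  let valL : ((Fin (2 * ℓ + 1) → F) → ZMod 2) →ₗ[ZMod 2]
      (((Fin (2 * ℓ + 1) → F) ⊕ (Σ i : Fin m, (Fin (2 * ℓ + 1) → F) ⧸ V i)) → ZMod 2) :=
    LinearMap.pi (fun a =>
      match a with
      | Sum.inl u => LinearMap.proj u
      | Sum.inr ⟨_, c⟩ =>
          ∑ w ∈ Finset.univ.filter (fun w => Submodule.Quotient.mk w = c),
            LinearMap.proj w)
  let enc : (Fin (q ^ (2 * ℓ + 1)) → ZMod 2) →ₗ[ZMod 2]
      (Fin (q ^ (2 * ℓ + 1) + m * q ^ (ℓ + 1)) → ZMod 2) :=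
    (LinearMap.funLeft (ZMod 2) (ZMod 2) ι) ∘ₗ valL ∘ₗ
      (LinearMap.funLeft (ZMod 2) (ZMod 2) e)
  have henc : ∀ (x : Fin (q ^ (2 * ℓ + 1)) → ZMod 2) j,
      enc x j = valL (x ∘ e) (ι j) := fun _ _ => rfl
  have hval1 : ∀ (y : (Fin (2 * ℓ + 1) → F) → ZMod 2) (u : Fin (2 * ℓ + 1) → F),
      valL y (Sum.inl u) = y u := fun _ _ => rfl
  have hval2 : ∀ (y : (Fin (2 * ℓ + 1) → F) → ZMod 2) (i : Fin m)
      (c : (Fin (2 * ℓ + 1) → F) ⧸ V i),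
      valL y (Sum.inr ⟨i, c⟩) =
        ∑ w ∈ Finset.univ.filter (fun w => Submodule.Quotient.mk w = c), y w := by
    intro y i c
    show (∑ w ∈ Finset.univ.filter (fun w => Submodule.Quotient.mk w = c),
      LinearMap.proj (R := ZMod 2) (φ := fun _ : Fin (2 * ℓ + 1) → F => ZMod 2) w) y = _
    simp [LinearMap.sum_apply]
  refine ⟨enc, ?_, ?_⟩
  · -- injectivity
    intro x y h
    funext p
    have := congrFun h (ι.symm (Sum.inl (e.symm p)))
    rw [henc, henc, Equiv.apply_symm_apply, hval1, hval1] at this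
    simpa using this
  · -- batch property
    intro r
    have hk : (m / L) * L ≤ m := Nat.div_mul_le_self m L
    set u : Fin (m / L) → (Fin (2 * ℓ + 1) → F) := fun t => e.symm (r t) with hu
    obtain ⟨i, hi⟩ := greedy hL hm hnice hk u
    have hi' : ∀ s t : Fin (m / L), s ≠ t → ¬ BConflict V (u s) (i s) (u t) (i t) := hi
    -- recovery sets
    set C : Fin (m / L) → Finset (Fin (2 * ℓ + 1) → F) := fun t =>
      Finset.univ.filter (fun w => w - u t ∈ V (i t) ∧ w ≠ u t) with hC
    set S : Fin (m / L) → Finset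
        ((Fin (2 * ℓ + 1) → F) ⊕ (Σ j : Fin m, (Fin (2 * ℓ + 1) → F) ⧸ V j)) := fun t =>
      insert (Sum.inr ⟨i t, Submodule.Quotient.mk (u t)⟩) ((C t).image Sum.inl) with hS
    refine ⟨fun t => (S t).image (fun a => ι.symm a), ?_, ?_⟩
    · -- disjointness
      intro t₁ t₂ hne
      rw [Finset.disjoint_image ι.symm.injective]
      rw [Finset.disjoint_left]
      intro b hb1 hb2
      have key : ∀ (a b : Fin m) (x y : Fin (2 * ℓ + 1) → F),
          (⟨a, Submodule.Quotient.mk x⟩ : Σ j : Fin m, (Fin (2 * ℓ + 1) → F) ⧸ V j) =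
            ⟨b, Submodule.Quotient.mk y⟩ → a = b ∧ x - y ∈ V a := by
        rintro a b x y hab
        obtain ⟨h1, h2⟩ := Sigma.mk.inj_iff.mp hab
        subst h1
        exact ⟨rfl, (Submodule.Quotient.eq _).mp (eq_of_heq h2)⟩
      apply hi' t₁ t₂ hne
      simp only [hS, Finset.mem_insert, Finset.mem_image] at hb1 hb2
      rcases hb1 with hb1 | ⟨w₁, hw₁, rfl⟩
      · rcases hb2 with hb2 | ⟨w₂, hw₂, hb2⟩
        · -- both parity symbols equal
          obtain ⟨h1, h2⟩ := key _ _ _ _ (Sum.inr.inj (hb1.symm.trans hb2))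
          exact Or.inl ⟨h1, h2⟩
        · exact absurd (hb1 ▸ hb2) (by simp)
      · rcases hb2 with hb2 | ⟨w₂, hw₂, hb2⟩
        · exact absurd hb2 (by simp)
        · -- both systematic, same point
          have hww : w₂ = w₁ := Sum.inl.inj hb2
          subst hww
          simp only [hC, Finset.mem_filter] at hw₁ hw₂
          exact Or.inr ⟨w₂, hw₁.2.1, hw₂.2.1, hw₁.2.2, hw₂.2.2⟩
    · -- correctness
      intro x t
      have hinj : Function.Injective (fun a :
          ((Fin (2 * ℓ + 1) → F) ⊕ (Σ j : Fin m, (Fin (2 * ℓ + 1) → F) ⧸ V j)) =>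
          ι.symm a) := ι.symm.injective
      rw [Finset.sum_image (fun a _ b _ hab => hinj hab)]
      have hrw : ∀ b ∈ S t, enc x (ι.symm b) = valL (x ∘ e) b := by
        intro b _
        rw [henc, Equiv.apply_symm_apply]
      rw [Finset.sum_congr rfl hrw]
      have hnotmem : (Sum.inr ⟨i t, Submodule.Quotient.mk (u t)⟩ :
          (Fin (2 * ℓ + 1) → F) ⊕ (Σ j : Fin m, (Fin (2 * ℓ + 1) → F) ⧸ V j)) ∉
          (C t).image Sum.inl := by simp
      rw [hS]
      rw [Finset.sum_insert hnotmem]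
      rw [Finset.sum_image (fun a _ b _ hab => Sum.inl.inj hab)]
      have hsum1 : ∀ w ∈ C t, valL (x ∘ e) (Sum.inl w) = x (e w) := by
        intro w _; rw [hval1]; rfl
      rw [Finset.sum_congr rfl hsum1]
      rw [hval2]
      have hDeq : Finset.univ.filter
          (fun w => (Submodule.Quotient.mk w : (Fin (2 * ℓ + 1) → F) ⧸ V (i t)) =
            Submodule.Quotient.mk (u t)) = insert (u t) (C t) := by
        ext w
        simp only [Finset.mem_filter, Finset.mem_univ, true_and, Finset.mem_insert,
          hC, Submodule.Quotient.eq]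
        constructor
        · intro hw
          by_cases hwu : w = u t
          · exact Or.inl hwu
          · exact Or.inr ⟨hw, hwu⟩
        · rintro (rfl | ⟨hw, _⟩)
          · simpa using (V (i t)).zero_mem
          · exact hw
      have hunotC : u t ∉ C t := by simp [hC]
      rw [hDeq, Finset.sum_insert hunotC]
      have hxe : ∀ w, (x ∘ e) w = x (e w) := fun _ => rfl
      simp only [hxe]
      have hself : ∀ a : ZMod 2, a + a = 0 := by decide
      have hue : e (u t) = r t := by simp [hu]
      rw [hue]
      rw [add_assoc, hself, add_zero]
end

section
/- For every integer ℓ ≥ 1, every integer L ≥ ℓ and every prime power q, there exists an L-nice collection of ℓ-dimensional subspaces of 𝔽_q^{2ℓ+1} of cardinality ⌊(q−1)/ℓ⌋; in particular, the maximal cardinality m(L,ℓ,q) of an L-nice collection satisfies m(L,ℓ,q) ≥ ⌊(q−1)/ℓ⌋. -/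
open Polynomial Finset

namespace NiceAux

variable {F : Type} [Field F]

/-- the vector of powers `(1, t, t^2, ..., t^{n-1})`. -/
def pv (n : ℕ) (t : F) : Fin n → F := fun k => t ^ (k : ℕ)

lemma eval_eq_sum_fin (n : ℕ) (p : Polynomial F) (hp : p.natDegree < n) (t : F) :
    p.eval t = ∑ k : Fin n, p.coeff (k : ℕ) * t ^ (k : ℕ) := by
  rw [Polynomial.eval_eq_sum_range' hp, ← Fin.sum_univ_eq_sum_range]

/-- "transpose Vandermonde": if all power sums of weighted distinct points vanish,
the weights vanish. -/
lemma vanishing_coeffs {n : ℕ} {ι : Type} [Fintype ι] (hcard : Fintype.card ι ≤ n)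
    (x : ι → F) (hx : Function.Injective x) (c : ι → F)
    (h : ∀ k : Fin n, ∑ i, c i * x i ^ (k : ℕ) = 0) : ∀ i, c i = 0 := by
  classical
  intro i0
  set R : Polynomial F := ∏ i ∈ Finset.univ.erase i0, (X - C (x i)) with hR
  have hdeg : R.natDegree < n := by
    have h1 : R.natDegree ≤ ∑ i ∈ Finset.univ.erase i0, (X - C (x i)).natDegree :=
      Polynomial.natDegree_prod_le _ _
    have h2 : ∑ i ∈ Finset.univ.erase i0, (X - C (x i)).natDegree
        = (Finset.univ.erase i0).card := by
      simp [Polynomial.natDegree_X_sub_C]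
    have h3 : (Finset.univ.erase i0).card < Fintype.card ι := by
      rw [Finset.card_erase_of_mem (Finset.mem_univ _)]
      have : 0 < Fintype.card ι := Fintype.card_pos_iff.mpr ⟨i0⟩
      rw [Finset.card_univ]
      omega
    omega
  have key : ∑ i, c i * R.eval (x i) = 0 := by
    calc ∑ i, c i * R.eval (x i)
        = ∑ i, ∑ k : Fin n, R.coeff (k : ℕ) * (c i * x i ^ (k : ℕ)) := by
          refine Finset.sum_congr rfl fun i _ => ?_
          rw [eval_eq_sum_fin n R hdeg, Finset.mul_sum]
          exact Finset.sum_congr rfl fun k _ => by ring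
      _ = ∑ k : Fin n, R.coeff (k : ℕ) * ∑ i, c i * x i ^ (k : ℕ) := by
          rw [Finset.sum_comm]
          exact Finset.sum_congr rfl fun k _ => (Finset.mul_sum _ _ _).symm
      _ = 0 := by simp [h]
  have hsingle : ∑ i, c i * R.eval (x i) = c i0 * R.eval (x i0) := by
    refine Fintype.sum_eq_single i0 fun i hi => ?_
    have : R.eval (x i) = 0 := by
      have hmem : i ∈ Finset.univ.erase i0 := Finset.mem_erase.mpr ⟨hi, Finset.mem_univ _⟩
      rw [hR, Polynomial.eval_prod]
      exact Finset.prod_eq_zero hmem (by simp)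
    rw [this, mul_zero]
  have hne : R.eval (x i0) ≠ 0 := by
    rw [hR, Polynomial.eval_prod]
    refine Finset.prod_ne_zero_iff.mpr fun i hi => ?_
    have : x i0 ≠ x i := fun hxx => (Finset.mem_erase.mp hi).1 (hx hxx.symm)
    simp only [Polynomial.eval_sub, Polynomial.eval_X, Polynomial.eval_C, sub_ne_zero]
    exact this
  have := key.symm.trans hsingle
  exact (mul_eq_zero.mp this.symm).resolve_right hne

lemma linearIndependent_pv {n : ℕ} {ι : Type} [Fintype ι] (hcard : Fintype.card ι ≤ n)
    (x : ι → F) (hx : Function.Injective x) :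
    LinearIndependent F (fun i => pv n (x i)) := by
  rw [Fintype.linearIndependent_iff]
  intro c hc
  refine vanishing_coeffs hcard x hx c fun k => ?_
  have := congr_fun hc k
  simpa [pv] using this


/-- the polynomial with roots `t*g^0, ..., t*g^{k-1}`. -/
noncomputable def Q (g t : F) (k : ℕ) : Polynomial F :=
  ∏ r ∈ Finset.range k, (X - C (t * g ^ r))

noncomputable def Dp (g : F) (s : ℕ) : F := ∏ i ∈ Finset.range s, (g ^ (i + 1) - 1)

noncomputable def Np (g : F) (k s : ℕ) : F := ∏ i ∈ Finset.range s, (g ^ (k - s + 1 + i) - 1)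

lemma Q_monic (g t : F) (k : ℕ) : (Q g t k).Monic :=
  monic_prod_of_monic _ _ fun _ _ => monic_X_sub_C _

lemma Q_natDegree (g t : F) (k : ℕ) : (Q g t k).natDegree = k := by
  rw [Q, Polynomial.natDegree_prod]
  · simp only [Polynomial.natDegree_X_sub_C, Finset.sum_const, Finset.card_range,
      smul_eq_mul, mul_one]
  · intro r _; exact Polynomial.X_sub_C_ne_zero _

lemma Q_succ (g t : F) (k : ℕ) : Q g t (k + 1) = Q g t k * (X - C (t * g ^ k)) := by
  rw [Q, Finset.prod_range_succ]; rfl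

lemma master (g t : F) : ∀ k s : ℕ, s ≤ k →
    Dp g s * (Q g t k).coeff (k - s)
      = (-1 : F) ^ s * g ^ (s.choose 2) * t ^ s * Np g k s := by
  intro k
  induction k with
  | zero =>
    intro s hs
    interval_cases s
    simp [Dp, Np, Q]
  | succ k ih =>
    intro s hs
    have hpow : ∀ a b : ℕ, a = b → g ^ a - 1 = g ^ b - 1 := fun a b h => by rw [h]
    rcases Nat.eq_zero_or_pos s with hs0 | hspos
    · subst hs0
      simp only [Nat.sub_zero, Dp, Np, Finset.range_zero, Finset.prod_empty, one_mul,
        pow_zero, mul_one]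
      have h1 := (Q_monic g t (k+1)).leadingCoeff
      rw [Polynomial.leadingCoeff, Q_natDegree] at h1
      have h2 : Nat.choose 0 2 = 0 := rfl
      rw [h1, h2, pow_zero]
    · obtain ⟨s', rfl⟩ : ∃ s', s = s' + 1 := ⟨s - 1, by omega⟩
      have hDs : Dp g (s' + 1) = Dp g s' * (g ^ (s' + 1) - 1) :=
        Finset.prod_range_succ _ _
      have hσ : (s' + 1).choose 2 = s'.choose 2 + s' := by
        rw [Nat.choose_succ_succ]
        simp [Nat.choose_one_right, Nat.add_comm]
      by_cases hsk : s' + 1 ≤ k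
      · -- main case
        have hd : k + 1 - (s' + 1) = (k - (s' + 1)) + 1 := by omega
        rw [Q_succ, hd, Polynomial.coeff_mul_X_sub_C]
        have hidx : k - (s' + 1) + 1 = k - s' := by omega
        rw [hidx]
        have hc1 := ih (s' + 1) hsk
        have hc2 := ih s' (by omega)
        have hNp1 : Np g (k + 1) (s' + 1) = Np g k s' * (g ^ (k + 1) - 1) := by
          rw [Np, Finset.prod_range_succ, Np]
          exact congrArg₂ (· * ·)
            (Finset.prod_congr rfl fun i _ => hpow _ _ (by omega)) (hpow _ _ (by omega))
        have hNp2 : Np g k (s' + 1) = Np g k s' * (g ^ (k - s') - 1) := by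
          rw [Np, Finset.prod_range_succ', Np]
          exact congrArg₂ (· * ·)
            (Finset.prod_congr rfl fun i _ => hpow _ _ (by omega)) (hpow _ _ (by omega))
        rw [hσ, hNp2] at hc1
        rw [hDs, hσ, hNp1]
        have e1 : g ^ (k + 1) = g ^ (k - s') * g ^ s' * g := by
          rw [← pow_add, ← pow_succ]; congr 1; omega
        have e2 : g ^ k = g ^ (k - s') * g ^ s' := by
          rw [← pow_add]; congr 1; omega
        have e3 : g ^ (s' + 1) = g ^ s' * g := pow_succ g s'
        have e4 : g ^ (s'.choose 2 + s') = g ^ s'.choose 2 * g ^ s' := pow_add g _ _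
        have e5 : t ^ (s' + 1) = t ^ s' * t := pow_succ t s'
        have e6 : ((-1 : F)) ^ (s' + 1) = (-1 : F) ^ s' * (-1) := pow_succ _ s'
        rw [e1, e2, e3, e4, e5, e6]
        rw [hDs, e3, e4, e5, e6] at hc1
        linear_combination hc1 - (t * g ^ (k - s') * g ^ s' * (g ^ s' * g - 1)) * hc2
      · -- boundary case s' = k
        obtain rfl : s' = k := by omega
        have hd : s' + 1 - (s' + 1) = 0 := by omega
        rw [Q_succ, hd, Polynomial.mul_coeff_zero]
        have hcoeff0 : (X - C (t * g ^ s')).coeff 0 = -(t * g ^ s') := by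
          rw [Polynomial.coeff_sub, Polynomial.coeff_X_zero, Polynomial.coeff_C_zero]
          ring
        rw [hcoeff0]
        have hc := ih s' le_rfl
        rw [Nat.sub_self] at hc
        have hDk : Dp g (s' + 1) = Dp g s' * (g ^ (s' + 1) - 1) :=
          Finset.prod_range_succ _ _
        have hNp : Np g (s' + 1) (s' + 1) = Np g s' s' * (g ^ (s' + 1) - 1) := by
          rw [Np, Finset.prod_range_succ, Np]
          exact congrArg₂ (· * ·)
            (Finset.prod_congr rfl fun i _ => hpow _ _ (by omega)) (hpow _ _ (by omega))
        rw [hDk, hσ, hNp]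
        have e1 : g ^ (s' + 1) = g ^ s' * g := pow_succ g s'
        have e4 : g ^ (s'.choose 2 + s') = g ^ s'.choose 2 * g ^ s' := pow_add g _ _
        have e5 : t ^ (s' + 1) = t ^ s' * t := pow_succ t s'
        have e6 : ((-1 : F)) ^ (s' + 1) = (-1 : F) ^ s' * (-1) := pow_succ _ s'
        rw [e1, e4, e5, e6]
        linear_combination (-(t * g ^ s')) * (g ^ s' * g - 1) * hc




/-- pairing between a vector and a polynomial's coefficients. -/
def B (n : ℕ) (w : Fin n → F) (f : Polynomial F) : F := ∑ k : Fin n, w k * f.coeff (k : ℕ)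

lemma B_pv {n : ℕ} (t : F) (f : Polynomial F) (hf : f.natDegree < n) :
    B n (pv n t) f = f.eval t := by
  rw [eval_eq_sum_fin n f hf, B]
  exact Finset.sum_congr rfl fun k _ => by rw [pv]; ring

lemma B_add {n : ℕ} (w w' : Fin n → F) (f : Polynomial F) :
    B n (w + w') f = B n w f + B n w' f := by
  simp [B, add_mul, Finset.sum_add_distrib]

lemma B_smul {n : ℕ} (a : F) (w : Fin n → F) (f : Polynomial F) :
    B n (a • w) f = a * B n w f := by
  simp [B, Finset.mul_sum, mul_assoc]

lemma B_zero {n : ℕ} (f : Polynomial F) : B n (0 : Fin n → F) f = 0 := by simp [B]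

lemma B_sum {n : ℕ} {ι : Type} (s : Finset ι) (u : ι → Fin n → F) (f : Polynomial F) :
    B n (∑ e ∈ s, u e) f = ∑ e ∈ s, B n (u e) f := by
  classical
  induction s using Finset.induction with
  | empty => simp [B]
  | insert _ _ hnot ih =>
    rw [Finset.sum_insert hnot, Finset.sum_insert hnot, B_add, ih]

lemma B_addf {n : ℕ} (w : Fin n → F) (f f' : Polynomial F) :
    B n w (f + f') = B n w f + B n w f' := by
  simp [B, mul_add, Finset.sum_add_distrib]

lemma B_smulf {n : ℕ} (w : Fin n → F) (a : F) (f : Polynomial F) :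
    B n w (a • f) = a * B n w f := by
  simp [B, Polynomial.coeff_smul, Finset.mul_sum]
  exact Finset.sum_congr rfl fun k _ => by ring

lemma B_zerof {n : ℕ} (w : Fin n → F) : B n w (0 : Polynomial F) = 0 := by simp [B]

lemma B_span_eq_zero {n ℓ' : ℕ} (pts : Fin ℓ' → F) (w : Fin n → F)
    (hw : w ∈ Submodule.span F (Set.range fun r => pv n (pts r)))
    (f : Polynomial F) (hf : f.natDegree < n) (hev : ∀ r, f.eval (pts r) = 0) :
    B n w f = 0 := by
  induction hw using Submodule.span_induction with
  | mem x hx =>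
    obtain ⟨r, rfl⟩ := hx
    rw [B_pv _ _ hf, hev]
  | zero => exact B_zero f
  | add x y _ _ hx hy => rw [B_add, hx, hy, add_zero]
  | smul a x _ hx => rw [B_smul, hx, mul_zero]

end NiceAux

open Polynomial Finset NiceAux in
/-- For every `ℓ ≥ 1`, every `L ≥ ℓ` and every prime power `q` there exists an
`L`-nice collection of `ℓ`-dimensional subspaces of `𝔽_q^{2ℓ+1}` of cardinality
`⌊(q-1)/ℓ⌋`; hence `m(L, ℓ, q) ≥ ⌊(q-1)/ℓ⌋`. -/
theorem exists_nice_collection (q ℓ L : ℕ) (hℓ : 1 ≤ ℓ) (hL : ℓ ≤ L)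
    (F : Type) [Field F] [Fintype F] (hq : Fintype.card F = q) :
    ∃ V : Fin ((q - 1) / ℓ) → Submodule F (Fin (2 * ℓ + 1) → F),
      IsNice F ℓ L V := by
  classical
  set m : ℕ := (q - 1) / ℓ with hm
  -- a generator of the multiplicative group
  obtain ⟨g₀, hg₀⟩ := IsCyclic.exists_generator (α := Fˣ)
  have horder : orderOf g₀ = q - 1 := by
    rw [orderOf_eq_card_of_forall_mem_zpowers hg₀, Nat.card_eq_fintype_card, Fintype.card_units, hq]
  set g : F := (g₀ : F) with hgdef
  have hmlq : m * ℓ ≤ q - 1 := Nat.div_mul_le_self _ _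
  have powinj : ∀ a b : ℕ, a < q - 1 → b < q - 1 → g ^ a = g ^ b → a = b := by
    intro a b ha hb hab
    have h1 : g₀ ^ a = g₀ ^ b := Units.ext (by
      rw [Units.val_pow_eq_pow_val, Units.val_pow_eq_pow_val]; exact hab)
    exact pow_injOn_Iio_orderOf (by rwa [horder]) (by rwa [horder]) h1
  -- the evaluation points, grouped in blocks of `ℓ` consecutive powers of `g`
  set x : Fin m → Fin ℓ → F := fun j r => g ^ (ℓ * (j : ℕ) + (r : ℕ)) with hx
  have hexplt : ∀ (j : Fin m) (r : Fin ℓ), ℓ * (j : ℕ) + (r : ℕ) < q - 1 := by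
    intro j r
    have h1 : ℓ * (j : ℕ) + (r : ℕ) < ℓ * ((j : ℕ) + 1) := by
      rw [Nat.mul_succ]; exact Nat.add_lt_add_left r.isLt _
    have h2 : ℓ * ((j : ℕ) + 1) ≤ ℓ * m := Nat.mul_le_mul_left ℓ j.isLt
    have h3 : ℓ * m ≤ q - 1 := by rw [Nat.mul_comm]; exact hmlq
    omega
  have hdigits : ∀ (a b r s : ℕ), r < ℓ → s < ℓ → ℓ * a + r = ℓ * b + s →
      a = b ∧ r = s := by
    intro a b r s hr hs h
    have h1 : (ℓ * a + r) / ℓ = a := by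
      rw [Nat.mul_add_div (by omega), Nat.div_eq_of_lt hr, Nat.add_zero]
    have h2 : (ℓ * b + s) / ℓ = b := by
      rw [Nat.mul_add_div (by omega), Nat.div_eq_of_lt hs, Nat.add_zero]
    have hab : a = b := by rw [← h1, ← h2, h]
    subst hab
    exact ⟨rfl, by omega⟩
  have hxinj : ∀ (j j' : Fin m) (r r' : Fin ℓ), x j r = x j' r' → j = j' ∧ r = r' := by
    intro j j' r r' h
    have := powinj _ _ (hexplt j r) (hexplt j' r') h
    obtain ⟨h1, h2⟩ := hdigits _ _ _ _ r.isLt r'.isLt this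
    exact ⟨Fin.ext h1, Fin.ext h2⟩
  set n : ℕ := 2 * ℓ + 1 with hn
  set V : Fin m → Submodule F (Fin (2 * ℓ + 1) → F) :=
    fun j => Submodule.span F (Set.range fun r : Fin ℓ => pv (2 * ℓ + 1) (x j r)) with hV
  refine ⟨V, ?_, ?_, ?_⟩
  · -- dimension
    intro j
    have li : LinearIndependent F (fun r : Fin ℓ => pv (2 * ℓ + 1) (x j r)) :=
      linearIndependent_pv (by simp; omega) (x j)
        (fun r r' h => (hxinj j j r r' h).2)
    rw [hV]
    rw [finrank_span_eq_card li, Fintype.card_fin]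
  · -- pairwise trivial intersection
    intro i j hij
    have hsuminj : Function.Injective (Sum.elim (x i) (x j)) := by
      rintro (r | r) (r' | r') h
      · rw [(hxinj _ _ _ _ h).2]
      · exact absurd (hxinj _ _ _ _ h).1 hij
      · exact absurd (hxinj _ _ _ _ h).1 (Ne.symm hij)
      · rw [(hxinj _ _ _ _ h).2]
    have li : LinearIndependent F
        (fun e : Fin ℓ ⊕ Fin ℓ => pv (2 * ℓ + 1) (Sum.elim (x i) (x j) e)) :=
      linearIndependent_pv (by simp; omega) _ hsuminj
    have hfun : (fun e : Fin ℓ ⊕ Fin ℓ => pv (2 * ℓ + 1) (Sum.elim (x i) (x j) e))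
        = Sum.elim (fun r : Fin ℓ => pv (2 * ℓ + 1) (x i r))
            (fun r : Fin ℓ => pv (2 * ℓ + 1) (x j r)) := by
      funext e; cases e <;> rfl
    rw [hfun] at li
    obtain ⟨-, -, hdisj⟩ := linearIndependent_sum.mp li
    rw [disjoint_iff] at hdisj
    exact hdisj
  · -- the coset condition
    intro i v hv
    by_contra hA
    push_neg at hA
    haveI : Fintype {j : Fin m // ∃ w ∈ V i, v + w ∈ V j} := Fintype.ofFinite _
    have hcards : ℓ + 1 ≤ Fintype.card {j : Fin m // ∃ w ∈ V i, v + w ∈ V j} := by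
      rw [← Nat.card_eq_fintype_card]; omega
    obtain ⟨emb⟩ : Nonempty (Fin (ℓ + 1) ↪ {j : Fin m // ∃ w ∈ V i, v + w ∈ V j}) :=
      Function.Embedding.nonempty_iff_card_le.mpr (by simpa using hcards)
    set y : Fin (ℓ + 1) → Fin m := fun k => ((emb k) : Fin m) with hy
    have hyinj : Function.Injective y := fun a b hab => emb.injective (Subtype.ext hab)
    have hyprop : ∀ k, ∃ w ∈ V i, v + w ∈ V (y k) := fun k => (emb k).2
    have hyne : ∀ k, y k ≠ i := by
      intro k hk
      obtain ⟨w, hw, hvw⟩ := hyprop k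
      rw [hk] at hvw
      exact hv (by simpa using (V i).sub_mem hvw hw)
    have hm2 : ℓ + 2 ≤ m := by
      have h1 : (insert i (Finset.univ.image y)).card ≤ m := by
        refine le_trans (Finset.card_le_univ _) (by simp)
      have h2 : (Finset.univ.image y).card = ℓ + 1 := by
        rw [Finset.card_image_of_injective _ hyinj]; simp
      have h3 : (insert i (Finset.univ.image y)).card = ℓ + 2 := by
        rw [Finset.card_insert_of_notMem, h2]
        simp only [Finset.mem_image]
        rintro ⟨k, -, hki⟩
        exact hyne k hki
      omega
    have hℓlt : ℓ < q - 1 := by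
      have h1 : (ℓ + 2) * ℓ ≤ m * ℓ := Nat.mul_le_mul_right ℓ hm2
      have h2 : ℓ < (ℓ + 2) * ℓ := by nlinarith
      exact lt_of_lt_of_le h2 (le_trans h1 hmlq)
    have hg1 : ∀ e : ℕ, 1 ≤ e → e ≤ ℓ → g ^ e ≠ 1 := by
      intro e h1 h2 hcon
      have hu : g₀ ^ e = 1 := Units.ext (by
        rw [Units.val_pow_eq_pow_val]; simpa using hcon)
      exact pow_ne_one_of_lt_orderOf (by omega) (by rw [horder]; omega) hu
    -- the block polynomials
    set Pb : Fin m → Polynomial F := fun j => Q g (g ^ (ℓ * (j : ℕ))) ℓ with hPb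
    have hPbroot : ∀ (j : Fin m) (r : Fin ℓ), (Pb j).eval (x j r) = 0 := by
      intro j r
      simp only [hPb, Q, Polynomial.eval_prod]
      refine Finset.prod_eq_zero (Finset.mem_range.mpr r.isLt) ?_
      simp only [Polynomial.eval_sub, Polynomial.eval_X, Polynomial.eval_C, hx]
      rw [pow_add]
      ring
    have hPbmonic : ∀ j, (Pb j).Monic := fun j => Q_monic _ _ _
    have hPbdeg : ∀ j, (Pb j).natDegree = ℓ := fun j => Q_natDegree _ _ _
    -- Step 1 : the pairing of `v` with `Pb i * Pb (y k)` vanishes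
    have step1 : ∀ k : Fin (ℓ + 1), B (2*ℓ+1) v (Pb i * Pb (y k)) = 0 := by
      intro k
      obtain ⟨w, hw, hvw⟩ := hyprop k
      simp only [hV] at hw hvw
      have hdeg : (Pb i * Pb (y k)).natDegree < 2 * ℓ + 1 := by
        rw [(hPbmonic i).natDegree_mul (hPbmonic (y k)), hPbdeg, hPbdeg]; omega
      have hz1 : B (2*ℓ+1) w (Pb i * Pb (y k)) = 0 :=
        B_span_eq_zero (x i) w hw _ hdeg
          (fun r => by rw [Polynomial.eval_mul, hPbroot i r, zero_mul])
      have hz2 : B (2*ℓ+1) (v + w) (Pb i * Pb (y k)) = 0 :=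
        B_span_eq_zero (x (y k)) (v + w) hvw _ hdeg
          (fun r => by rw [Polynomial.eval_mul, hPbroot (y k) r, mul_zero])
      have h3 : B (2*ℓ+1) v (Pb i * Pb (y k)) + B (2*ℓ+1) w (Pb i * Pb (y k)) = 0 := by
        rw [← B_add]; exact hz2
      rw [hz1, add_zero] at h3
      exact h3
    -- Step 2 : the polynomials `Pb (y k)` span all polynomials of degree at most ℓ
    set tpar : Fin (ℓ + 1) → F := fun k => g ^ (ℓ * (y k : ℕ)) with htpar
    have htlt : ∀ k, ℓ * ((y k : Fin m) : ℕ) < q - 1 := by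
      intro k
      have := hexplt (y k) ⟨0, by omega⟩
      simpa using this
    have htinj : Function.Injective tpar := by
      intro a b hab
      have h1 := powinj _ _ (htlt a) (htlt b) hab
      have h2 : ((y a : Fin m) : ℕ) = (y b : Fin m) :=
        Nat.eq_of_mul_eq_mul_left (by omega) h1
      exact hyinj (Fin.ext h2)
    have li2 : LinearIndependent F (fun k : Fin (ℓ + 1) => Pb (y k)) := by
      rw [Fintype.linearIndependent_iff]
      intro c hc
      have hps : ∀ s : Fin (ℓ + 1), ∑ k, c k * tpar k ^ (s : ℕ) = 0 := by
        intro s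
        have hcoeff : ∑ k, c k * (Pb (y k)).coeff (ℓ - (s : ℕ)) = 0 := by
          have h0 := congrArg (fun p : Polynomial F => p.coeff (ℓ - (s : ℕ))) hc
          simpa [Polynomial.finset_sum_coeff, Polynomial.coeff_smul, smul_eq_mul] using h0
        have hmaster : ∀ k : Fin (ℓ+1), Dp g (s : ℕ) * (Pb (y k)).coeff (ℓ - (s : ℕ))
            = (-1:F)^(s:ℕ) * g ^ (Nat.choose (s:ℕ) 2) * (tpar k) ^ (s:ℕ) * Np g ℓ (s:ℕ) := by
          intro k
          simp only [hPb, htpar]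
          exact master g (g ^ (ℓ * ((y k : Fin m) : ℕ))) ℓ (s : ℕ) (by omega)
        have h2 : ((-1:F)^(s:ℕ) * g ^ (Nat.choose (s:ℕ) 2) * Np g ℓ (s:ℕ))
            * (∑ k, c k * tpar k ^ (s:ℕ)) = 0 := by
          calc ((-1:F)^(s:ℕ) * g ^ (Nat.choose (s:ℕ) 2) * Np g ℓ (s:ℕ))
                * (∑ k, c k * tpar k ^ (s:ℕ))
              = ∑ k, c k * ((-1:F)^(s:ℕ) * g ^ (Nat.choose (s:ℕ) 2)
                  * (tpar k) ^ (s:ℕ) * Np g ℓ (s:ℕ)) := by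
                rw [Finset.mul_sum]
                exact Finset.sum_congr rfl fun k _ => by ring
            _ = ∑ k, c k * (Dp g (s : ℕ) * (Pb (y k)).coeff (ℓ - (s : ℕ))) := by
                exact Finset.sum_congr rfl fun k _ => by rw [hmaster k]
            _ = Dp g (s : ℕ) * ∑ k, c k * (Pb (y k)).coeff (ℓ - (s : ℕ)) := by
                rw [Finset.mul_sum]
                exact Finset.sum_congr rfl fun k _ => by ring
            _ = 0 := by rw [hcoeff, mul_zero]
        have hNe : ((-1:F)^(s:ℕ) * g ^ (Nat.choose (s:ℕ) 2) * Np g ℓ (s:ℕ)) ≠ 0 := by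
          refine mul_ne_zero (mul_ne_zero ?_ ?_) ?_
          · exact pow_ne_zero _ (neg_ne_zero.mpr one_ne_zero)
          · exact pow_ne_zero _ (Units.ne_zero g₀)
          · rw [Np]
            refine Finset.prod_ne_zero_iff.mpr fun i2 hi2 => sub_ne_zero.mpr ?_
            have hi2' : i2 < (s : ℕ) := Finset.mem_range.mp hi2
            have hs' : (s : ℕ) ≤ ℓ := by omega
            exact hg1 _ (by omega) (by omega)
        exact (mul_eq_zero.mp h2).resolve_left hNe
      exact fun k => vanishing_coeffs (n := ℓ + 1) (by simp) tpar htinj c hps k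
    have hPbmem : ∀ k : Fin (ℓ + 1), Pb (y k) ∈ Polynomial.degreeLT F (ℓ + 1) := by
      intro k
      rw [Polynomial.mem_degreeLT]
      have h1 : (Pb (y k)).degree ≤ (ℓ : WithBot ℕ) := by
        rw [← hPbdeg (y k)]; exact Polynomial.degree_le_natDegree
      exact lt_of_le_of_lt h1 (by exact_mod_cast Nat.lt_succ_self ℓ)
    haveI : FiniteDimensional F (Polynomial.degreeLT F (ℓ + 1) : Submodule F (Polynomial F)) :=
      Module.Finite.equiv (Polynomial.degreeLTEquiv F (ℓ + 1)).symm
    have hMle : Submodule.span F (Set.range fun k : Fin (ℓ+1) => Pb (y k))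
        ≤ Polynomial.degreeLT F (ℓ + 1) := by
      rw [Submodule.span_le]; rintro f ⟨k, rfl⟩; exact hPbmem k
    have hfr1 : Module.finrank F
        (Submodule.span F (Set.range fun k : Fin (ℓ+1) => Pb (y k))) = ℓ + 1 := by
      rw [finrank_span_eq_card li2, Fintype.card_fin]
    have hfr2 : Module.finrank F
        (Polynomial.degreeLT F (ℓ + 1) : Submodule F (Polynomial F)) = ℓ + 1 := by
      rw [(Polynomial.degreeLTEquiv F (ℓ + 1)).finrank_eq, Module.finrank_pi, Fintype.card_fin]
    have hMeq : Submodule.span F (Set.range fun k : Fin (ℓ+1) => Pb (y k))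
        = Polynomial.degreeLT F (ℓ+1) :=
      Submodule.eq_of_le_of_finrank_le hMle (by rw [hfr1, hfr2])
    have span2 : ∀ f : Polynomial F, f ∈ Polynomial.degreeLT F (ℓ+1) →
        B (2*ℓ+1) v (Pb i * f) = 0 := by
      intro f hf
      rw [← hMeq] at hf
      induction hf using Submodule.span_induction with
      | mem p hp =>
        obtain ⟨k, rfl⟩ := hp
        exact step1 k
      | zero => rw [mul_zero]; exact B_zerof v
      | add p p' _ _ hp hp' => rw [mul_add, B_addf, hp, hp', add_zero]
      | smul a p _ hp => rw [mul_smul_comm, B_smulf, hp, mul_zero]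
    -- Step 3 : conclude that `v ∈ V i`, a contradiction
    set pts : Fin ℓ ⊕ Fin (ℓ + 1) → F := Sum.elim (x i) tpar with hpts
    have hptsinj : Function.Injective pts := by
      have hcross : ∀ (r : Fin ℓ) (b : Fin (ℓ+1)), x i r ≠ tpar b := by
        intro r b hcon
        have h0 : (ℓ * ((y b : Fin m) : ℕ) + 0) < q - 1 := by
          have := htlt b; omega
        have h1 := powinj _ _ (hexplt i r) (by omega : ℓ * ((y b : Fin m) : ℕ) < q - 1)
          (by simpa [hx, htpar] using hcon)
        obtain ⟨hie, hre⟩ := hdigits (i : ℕ) ((y b : Fin m) : ℕ) (r : ℕ) 0 r.isLt (by omega)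
          (by omega)
        exact hyne b (Fin.ext hie.symm)
      rintro (r | a) (r' | b) h
      · simp only [hpts, Sum.elim_inl] at h
        rw [(hxinj _ _ _ _ h).2]
      · exact absurd (by simpa [hpts] using h) (hcross r b)
      · exact absurd (by simpa [hpts] using h.symm) (hcross r' a)
      · simp only [hpts, Sum.elim_inr] at h
        rw [htinj h]
    have li3 : LinearIndependent F (fun e => pv (2*ℓ+1) (pts e)) :=
      linearIndependent_pv (by simp; omega) pts hptsinj
    have htop : Submodule.span F (Set.range fun e => pv (2*ℓ+1) (pts e)) = ⊤ :=
      li3.span_eq_top_of_card_eq_finrank (by simp [Module.finrank_pi]; omega)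
    have hvtop : v ∈ Submodule.span F (Set.range fun e => pv (2*ℓ+1) (pts e)) := by
      rw [htop]; exact Submodule.mem_top
    obtain ⟨c, hcv⟩ := (Submodule.mem_span_range_iff_exists_fun F).mp hvtop
    have hcr : ∀ s0 : Fin (ℓ + 1), c (Sum.inr s0) = 0 := by
      intro s0
      set G : Polynomial F := ∏ k ∈ Finset.univ.erase s0, (X - C (tpar k)) with hG
      have hGmonic : G.Monic := monic_prod_of_monic _ _ fun _ _ => monic_X_sub_C _
      have hGdeg : G.natDegree ≤ ℓ := by
        calc G.natDegree ≤ ∑ k ∈ Finset.univ.erase s0, (X - C (tpar k)).natDegree :=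
              Polynomial.natDegree_prod_le _ _
          _ = (Finset.univ.erase s0).card := by
              simp [Polynomial.natDegree_X_sub_C]
          _ ≤ ℓ := by
              rw [Finset.card_erase_of_mem (Finset.mem_univ _)]; simp
      have hGLT : G ∈ Polynomial.degreeLT F (ℓ + 1) := by
        rw [Polynomial.mem_degreeLT]
        exact lt_of_le_of_lt Polynomial.degree_le_natDegree
          (by exact_mod_cast Nat.lt_succ_of_le hGdeg)
      have hBG : B (2*ℓ+1) v (Pb i * G) = 0 := span2 G hGLT
      have hdegPG : (Pb i * G).natDegree < 2*ℓ+1 := by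
        rw [(hPbmonic i).natDegree_mul hGmonic, hPbdeg]; omega
      rw [← hcv, B_sum] at hBG
      have hterm : ∀ e, e ≠ Sum.inr s0 →
          B (2*ℓ+1) (c e • pv (2*ℓ+1) (pts e)) (Pb i * G) = 0 := by
        intro e he
        rw [B_smul, B_pv _ _ hdegPG]
        rcases e with r | k
        · rw [Polynomial.eval_mul]
          simp only [hpts, Sum.elim_inl]
          rw [hPbroot i r, zero_mul, mul_zero]
        · have hk : k ≠ s0 := fun hk => he (by rw [hk])
          rw [Polynomial.eval_mul]
          have hGz : G.eval (pts (Sum.inr k)) = 0 := by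
            rw [hG, Polynomial.eval_prod]
            refine Finset.prod_eq_zero (Finset.mem_erase.mpr ⟨hk, Finset.mem_univ _⟩) ?_
            simp [hpts]
          rw [hGz, mul_zero, mul_zero]
      rw [Fintype.sum_eq_single (Sum.inr s0) hterm] at hBG
      rw [B_smul, B_pv _ _ hdegPG, Polynomial.eval_mul] at hBG
      have hPbne : (Pb i).eval (pts (Sum.inr s0)) ≠ 0 := by
        simp only [hPb, Q, Polynomial.eval_prod]
        refine Finset.prod_ne_zero_iff.mpr fun r hr => ?_
        simp only [Polynomial.eval_sub, Polynomial.eval_X, Polynomial.eval_C]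
        refine sub_ne_zero.mpr fun hcon => ?_
        have hxr : x i ⟨r, Finset.mem_range.mp hr⟩ = pts (Sum.inr s0) := by
          simp only [hx, hpts, Sum.elim_inr]
          rw [pow_add]
          exact hcon.symm
        have : pts (Sum.inl ⟨r, Finset.mem_range.mp hr⟩) = pts (Sum.inr s0) := by
          simpa [hpts] using hxr
        exact Sum.inl_ne_inr (hptsinj this)
      have hGne : G.eval (pts (Sum.inr s0)) ≠ 0 := by
        rw [hG, Polynomial.eval_prod]
        refine Finset.prod_ne_zero_iff.mpr fun k hk => ?_
        simp only [Polynomial.eval_sub, Polynomial.eval_X, Polynomial.eval_C]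
        refine sub_ne_zero.mpr fun hcon => ?_
        have : pts (Sum.inr s0) = pts (Sum.inr k) := by simpa [hpts] using hcon
        exact (Finset.mem_erase.mp hk).1 (Sum.inr_injective (hptsinj this)).symm
      rcases mul_eq_zero.mp hBG with h | h
      · exact h
      · exact absurd h (mul_ne_zero hPbne hGne)
    have hfinal : v ∈ V i := by
      rw [← hcv, Fintype.sum_sum_type]
      have h2 : ∑ k : Fin (ℓ+1), c (Sum.inr k) • pv (2*ℓ+1) (pts (Sum.inr k)) = 0 :=
        Finset.sum_eq_zero fun k _ => by rw [hcr k, zero_smul]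
      rw [h2, add_zero]
      simp only [hV]
      refine Submodule.sum_mem _ fun r _ => Submodule.smul_mem _ _ ?_
      have hrr : pts (Sum.inl r) = x i r := by simp [hpts]
      rw [hrr]
      exact Submodule.subset_span ⟨r, rfl⟩
    exact hv hfinal
end

section
/- Let ℓ ≥ 1 and L ≥ 1 be integers and q a prime power with L ≤ q^ℓ − 1. Then every L-nice collection {V_1,…,V_m} of ℓ-dimensional subspaces of 𝔽_q^{2ℓ+1} satisfies m ≤ (L+1)·q. -/
/-- Upper bound on the size of a nice collection: if `L ≤ q^ℓ - 1`, then every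
`L`-nice collection of `ℓ`-dimensional subspaces of `𝔽_q^{2ℓ+1}` has at most
`(L+1)·q` members. -/
theorem nice_collection_card_le (q ℓ L m : ℕ) (hℓ : 1 ≤ ℓ) (hL : 1 ≤ L)
    (hLq : L ≤ q ^ ℓ - 1)
    (F : Type) [Field F] [Fintype F] (hq : Fintype.card F = q)
    (V : Fin m → Submodule F (Fin (2 * ℓ + 1) → F))
    (hnice : IsNice F ℓ L V) :
    m ≤ (L + 1) * q := by
  obtain ⟨hdim, hdisj, hcoset⟩ := hnice
  open Finset in
  classical
  have hq2 : 2 ≤ q := hq ▸ Fintype.one_lt_card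
  rcases Nat.eq_zero_or_pos m with hm | hm
  · omega
  set i0 : Fin m := ⟨0, hm⟩ with hi0
  set Q := (Fin (2 * ℓ + 1) → F) ⧸ V i0 with hQ
  have : Fintype Q := Fintype.ofFinite Q
  have hdimQ : Module.finrank F Q = ℓ + 1 := by
    show Module.finrank F ((Fin (2 * ℓ + 1) → F) ⧸ V i0) = ℓ + 1
    have h1 := Submodule.finrank_quotient_add_finrank (V i0)
    rw [hdim i0, Module.finrank_fin_fun] at h1
    omega
  have hcardQ : Fintype.card Q = q ^ (ℓ + 1) := by
    rw [Module.card_eq_pow_finrank (K := F), hdimQ, hq]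
  set W : Fin m → Submodule F Q := fun j => (V j).map (V i0).mkQ with hW
  have hcardW : ∀ j : Fin m, j ≠ i0 → Fintype.card (W j) = q ^ ℓ := by
    intro j hj
    have hinj : Function.Injective (((V i0).mkQ).comp (V j).subtype) := by
      rw [← LinearMap.ker_eq_bot, LinearMap.ker_eq_bot']
      intro x hx
      have hx0 : (x : Fin (2 * ℓ + 1) → F) ∈ V i0 := by
        simpa [Submodule.Quotient.mk_eq_zero] using hx
      have : (x : Fin (2 * ℓ + 1) → F) ∈ V i0 ⊓ V j := ⟨hx0, x.2⟩
      rw [hdisj i0 j (Ne.symm hj)] at this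
      exact Subtype.ext (by simpa using this)
    have hrange : LinearMap.range (((V i0).mkQ).comp (V j).subtype) = W j := by
      rw [LinearMap.range_comp, Submodule.range_subtype]
    have hfr : Module.finrank F (W j) = ℓ := by
      rw [← hrange, LinearMap.finrank_range_of_inj hinj, hdim j]
    rw [Module.card_eq_pow_finrank (K := F), hfr, hq]
  -- count per subspace
  have count_left : ∀ j : Fin m, j ≠ i0 →
      (univ.filter fun x : Q => x ≠ 0 ∧ x ∈ W j).card = q ^ ℓ - 1 := by
    intro j hj
    have h1 : (univ.filter fun x : Q => x ≠ 0 ∧ x ∈ W j)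
        = (univ.filter fun x : Q => x ∈ W j).erase 0 := by
      ext x; simp [Finset.mem_erase, and_comm]
    have h2 : (univ.filter fun x : Q => x ∈ W j).card = q ^ ℓ := by
      rw [← hcardW j hj]
      simp [Fintype.card_subtype]
    rw [h1, Finset.card_erase_of_mem (by simp [Submodule.zero_mem] : (0:Q) ∈ _), h2]
  -- count per point
  have count_right : ∀ x : Q, x ≠ 0 →
      (univ.filter fun j : Fin m => j ≠ i0 ∧ x ≠ 0 ∧ x ∈ W j).card ≤ L := by
    intro x hx
    obtain ⟨v, hv⟩ := Submodule.Quotient.mk_surjective (V i0) x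
    have hvnot : v ∉ V i0 := by
      intro h
      exact hx (by rw [← hv, Submodule.Quotient.mk_eq_zero]; exact h)
    refine le_trans ?_ (hcoset i0 v hvnot)
    rw [Nat.card_eq_fintype_card, Fintype.card_subtype]
    apply Finset.card_le_card
    intro j hj
    simp only [Finset.mem_filter, Finset.mem_univ, true_and] at hj ⊢
    obtain ⟨hjne, -, hxW⟩ := hj
    obtain ⟨u, hu, hux⟩ := Submodule.mem_map.mp hxW
    refine ⟨u - v, ?_, by simpa using hu⟩
    have : Submodule.Quotient.mk (p := V i0) u = Submodule.Quotient.mk v := by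
      rw [hv]; exact hux
    exact (Submodule.Quotient.eq (V i0)).mp this
  -- double counting
  have swap : ∑ j : Fin m, ((univ.filter fun x : Q => j ≠ i0 ∧ x ≠ 0 ∧ x ∈ W j).card)
      = ∑ x : Q, ((univ.filter fun j : Fin m => j ≠ i0 ∧ x ≠ 0 ∧ x ∈ W j).card) := by
    simp only [Finset.card_filter]
    exact Finset.sum_comm
  have lhs_ge : (m - 1) * (q ^ ℓ - 1)
      ≤ ∑ j : Fin m, ((univ.filter fun x : Q => j ≠ i0 ∧ x ≠ 0 ∧ x ∈ W j).card) := by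
    calc (m - 1) * (q ^ ℓ - 1)
        = ∑ _j ∈ univ.erase i0, (q ^ ℓ - 1) := by
          rw [Finset.sum_const, Finset.card_erase_of_mem (mem_univ _), Finset.card_univ,
            Fintype.card_fin, smul_eq_mul]
      _ = ∑ j ∈ univ.erase i0, ((univ.filter fun x : Q => j ≠ i0 ∧ x ≠ 0 ∧ x ∈ W j).card) := by
          refine Finset.sum_congr rfl fun j hj => ?_
          have hjne : j ≠ i0 := Finset.ne_of_mem_erase hj
          rw [← count_left j hjne]
          congr 1
          ext x
          simp [hjne]
      _ ≤ _ := Finset.sum_le_sum_of_subset (Finset.erase_subset _ _)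
  have rhs_le : (∑ x : Q, ((univ.filter fun j : Fin m => j ≠ i0 ∧ x ≠ 0 ∧ x ∈ W j).card))
      ≤ (q ^ (ℓ + 1) - 1) * L := by
    calc (∑ x : Q, ((univ.filter fun j : Fin m => j ≠ i0 ∧ x ≠ 0 ∧ x ∈ W j).card))
        = ∑ x ∈ univ.erase (0 : Q),
            ((univ.filter fun j : Fin m => j ≠ i0 ∧ x ≠ 0 ∧ x ∈ W j).card) := by
          refine (Finset.sum_erase _ ?_).symm
          simp
      _ ≤ ∑ _x ∈ univ.erase (0 : Q), L := by
          refine Finset.sum_le_sum fun x hx => ?_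
          exact count_right x (Finset.ne_of_mem_erase hx)
      _ = (q ^ (ℓ + 1) - 1) * L := by
          rw [Finset.sum_const, Finset.card_erase_of_mem (mem_univ _), Finset.card_univ,
            hcardQ, smul_eq_mul]
  have main : (m - 1) * (q ^ ℓ - 1) ≤ (q ^ (ℓ + 1) - 1) * L :=
    le_trans (lhs_ge.trans_eq swap) rhs_le
  -- arithmetic conclusion
  have hql : 2 ≤ q ^ ℓ := le_trans hq2 (Nat.le_self_pow (by omega) q)
  obtain ⟨a, ha⟩ : ∃ a, q ^ ℓ = a + 1 := ⟨q ^ ℓ - 1, by omega⟩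
  have hLa : L ≤ a := by omega
  have hpow : q ^ (ℓ + 1) = q * (a + 1) := by rw [pow_succ, ha]; ring
  obtain ⟨m', hm'⟩ : ∃ m', m = m' + 1 := ⟨m - 1, by omega⟩
  have ha' : q ^ ℓ - 1 = a := by omega
  have main2 : m' * a ≤ (q * (a + 1) - 1) * L := by
    rw [hm', hpow, ha'] at main; simpa using main
  have hqa1 : 1 ≤ q * (a + 1) :=
    Nat.one_le_iff_ne_zero.mpr (Nat.mul_ne_zero (by omega) (by omega))
  obtain ⟨b, hb⟩ : ∃ b, q * (a + 1) = b + 1 := ⟨q * (a + 1) - 1, by omega⟩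
  rw [hb] at main2
  simp only [Nat.add_sub_cancel] at main2
  by_contra hcon
  push_neg at hcon
  have hdist : (L + 1) * q = L * q + q := by ring
  have h1 : L * q + q ≤ m' := by omega
  have h2 : (L * q + q) * a ≤ m' * a := Nat.mul_le_mul_right a h1
  have hb2 : b + 1 = q * a + q := by rw [← hb]; ring
  have e1 : (L * q + q) * a ≤ b * L := le_trans h2 main2
  have e2 : b * L + L = (q * a + q) * L := by rw [← hb2]; ring
  have e3 : (q * a + q) * L = q * a * L + q * L := by ring
  have e4 : (L * q + q) * a = q * a * L + q * a := by ring
  have e5 : q * L ≤ q * a := Nat.mul_le_mul_left q hLa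
  linarith
end

section
/- Let ℓ ≥ 1 and L ≥ 1 be integers and q a prime power. Then every L-nice collection {V_1,…,V_m} of ℓ-dimensional subspaces of 𝔽_q^{2ℓ+1} satisfies (m − 1)·(q^ℓ − 1) ≤ L·(q^{ℓ+1} − 1). -/
set_option maxHeartbeats 1000000 in
/-- Quantitative upper bound on the size of a nice collection: every `L`-nice
collection of `ℓ`-dimensional subspaces of `𝔽_q^{2ℓ+1}` satisfies
`(m - 1)·(q^ℓ - 1) ≤ L·(q^{ℓ+1} - 1)`. -/
theorem nice_collection_counting_bound (q ℓ L m : ℕ) (hℓ : 1 ≤ ℓ) (hL : 1 ≤ L)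
    (F : Type) [Field F] [Fintype F] (hq : Fintype.card F = q)
    (V : Fin m → Submodule F (Fin (2 * ℓ + 1) → F))
    (hnice : IsNice F ℓ L V) :
    (m - 1) * (q ^ ℓ - 1) ≤ L * (q ^ (ℓ + 1) - 1) := by
  classical
  obtain ⟨hdim, hdisj, hcoset⟩ := hnice
  rcases Nat.lt_or_ge m 1 with hm | hm
  · interval_cases m
    simp
  haveI : NeZero m := ⟨by omega⟩
  haveI : Finite ((Fin (2 * ℓ + 1) → F) ⧸ V 0) := Finite.of_surjective _ (Submodule.mkQ_surjective (V 0))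
  haveI : Fintype ((Fin (2 * ℓ + 1) → F) ⧸ V 0) := Fintype.ofFinite ((Fin (2 * ℓ + 1) → F) ⧸ V 0)
  have hrankM : Module.finrank F (Fin (2 * ℓ + 1) → F) = 2 * ℓ + 1 :=
    Module.finrank_fin_fun F
  have hrankQ : Module.finrank F ((Fin (2 * ℓ + 1) → F) ⧸ V 0) = ℓ + 1 := by
    have h := Submodule.finrank_quotient_add_finrank (V 0)
    rw [hrankM, hdim 0] at h
    omega
  have hcardQ : Fintype.card ((Fin (2 * ℓ + 1) → F) ⧸ V 0) = q ^ (ℓ + 1) := by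
    rw [Module.card_eq_pow_finrank (K := F), hq, hrankQ]
  set S : Fin m → Submodule F ((Fin (2 * ℓ + 1) → F) ⧸ V 0) := fun j => (V j).map (V 0).mkQ with hS
  -- cardinality of images
  have hcardS : ∀ j : Fin m, j ≠ 0 → Fintype.card (S j) = q ^ ℓ := by
    intro j hj
    have hinj : Function.Injective
        (fun x : V j => (V 0).mkQ (x : Fin (2 * ℓ + 1) → F)) := by
      intro x y hxy
      have hsub : (x : Fin (2 * ℓ + 1) → F) - y ∈ V 0 := (Submodule.Quotient.eq _).mp hxy
      have hsub' : (x : Fin (2 * ℓ + 1) → F) - y ∈ V j := sub_mem x.2 y.2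
      have : (x : Fin (2 * ℓ + 1) → F) - y ∈ V j ⊓ V 0 := ⟨hsub', hsub⟩
      rw [hdisj j 0 hj] at this
      exact Subtype.ext (sub_eq_zero.mp this)
    have h1 : (S j : Set ((Fin (2 * ℓ + 1) → F) ⧸ V 0))
        = Set.range (fun x : V j => (V 0).mkQ (x : Fin (2 * ℓ + 1) → F)) := by
      ext z
      simp only [SetLike.mem_coe, hS, Submodule.mem_map, Set.mem_range]
      constructor
      · rintro ⟨u, hu, rfl⟩; exact ⟨⟨u, hu⟩, rfl⟩
      · rintro ⟨⟨u, hu⟩, rfl⟩; exact ⟨u, hu, rfl⟩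
    have h2 : Nat.card (S j) = Nat.card (V j) := by
      rw [← SetLike.coe_sort_coe, h1]
      exact Nat.card_range_of_injective hinj
    have h3 : Fintype.card (V j) = q ^ ℓ := by
      rw [Module.card_eq_pow_finrank (K := F), hq, hdim j]
    rw [← Nat.card_eq_fintype_card, h2, Nat.card_eq_fintype_card, h3]
  set X : Finset ((Fin (2 * ℓ + 1) → F) ⧸ V 0) := Finset.univ.erase 0 with hX
  set J : Finset (Fin m) := Finset.univ.erase 0 with hJ
  have hXcard : X.card = q ^ (ℓ + 1) - 1 := by
    rw [hX, Finset.card_erase_of_mem (Finset.mem_univ _), Finset.card_univ, hcardQ]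
  have hJcard : J.card = m - 1 := by
    rw [hJ, Finset.card_erase_of_mem (Finset.mem_univ _), Finset.card_univ, Fintype.card_fin]
  -- double counting
  have key : ∑ j ∈ J, (X.filter (fun x => x ∈ S j)).card
      = ∑ x ∈ X, (J.filter (fun j => x ∈ S j)).card := by
    simp_rw [Finset.card_filter]
    rw [Finset.sum_comm]
  -- each column sum equals q^ℓ - 1
  have hcol : ∀ j ∈ J, (X.filter (fun x => x ∈ S j)).card = q ^ ℓ - 1 := by
    intro j hj
    have hj0 : j ≠ 0 := (Finset.mem_erase.mp hj).1
    have : X.filter (fun x => x ∈ S j)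
        = (Finset.univ.filter (fun x => x ∈ S j)).erase 0 := by
      rw [hX, Finset.filter_erase]
    rw [this, Finset.card_erase_of_mem (by simp [Submodule.zero_mem]),
      ← Fintype.card_subtype, hcardS j hj0]
  -- each row sum is at most L
  have hrow : ∀ x ∈ X, (J.filter (fun j => x ∈ S j)).card ≤ L := by
    intro x hx
    have hx0 : x ≠ 0 := (Finset.mem_erase.mp hx).1
    obtain ⟨v, hv⟩ := Submodule.mkQ_surjective (V 0) x
    have hv0 : v ∉ V 0 := by
      intro hmem
      apply hx0
      rw [← hv, Submodule.mkQ_apply, Submodule.Quotient.mk_eq_zero]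
      exact hmem
    have hL' := hcoset 0 v hv0
    rw [Nat.card_eq_fintype_card, Fintype.card_subtype] at hL'
    refine le_trans (Finset.card_le_card ?_) hL'
    intro j hjmem
    obtain ⟨-, hxj⟩ := Finset.mem_filter.mp hjmem
    obtain ⟨u, hu, huv⟩ := Submodule.mem_map.mp hxj
    refine Finset.mem_filter.mpr ⟨Finset.mem_univ _, u - v, ?_, ?_⟩
    · rw [← Submodule.Quotient.eq]
      simpa [Submodule.Quotient.mk''_eq_mk, ← Submodule.mkQ_apply, hv] using huv
    · simpa using hu
  calc (m - 1) * (q ^ ℓ - 1) = ∑ j ∈ J, (q ^ ℓ - 1) := by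
        rw [Finset.sum_const, hJcard, smul_eq_mul]
    _ = ∑ j ∈ J, (X.filter (fun x => x ∈ S j)).card := by
        exact (Finset.sum_congr rfl hcol).symm
    _ = ∑ x ∈ X, (J.filter (fun j => x ∈ S j)).card := key
    _ ≤ ∑ x ∈ X, L := Finset.sum_le_sum hrow
    _ = (q ^ (ℓ + 1) - 1) * L := by rw [Finset.sum_const, hXcard, smul_eq_mul]
    _ = L * (q ^ (ℓ + 1) - 1) := mul_comm _ _
end

section
/- Let q be a prime power with q ≥ ℓ + 2 for an integer ℓ ≥ 1, let α be a generator of 𝔽_q^×, and let i_1 < i_2 < … < i_{ℓ+1} be nonnegative integers with ℓ·i_{ℓ+1} + ℓ − 1 ≤ q − 2. Then the ℓ+1 polynomials f_u(x) = ∏_{j=0}^{ℓ−1} (x − α^{ℓ·i_u + j}) ∈ 𝔽_q[x], u ∈ [ℓ+1], are linearly independent over 𝔽_q. -/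
open Polynomial

private lemma expand_coeff {F : Type} [Field F] (t : F) (p : Polynomial F) (k : ℕ) :
    (p * (X - C t)).coeff (k + 1) = p.coeff k - t * p.coeff (k + 1) := by
  rw [mul_sub, coeff_sub, mul_comm p (C t), coeff_C_mul, coeff_mul_X]

private lemma expand_coeff₀ {F : Type} [Field F] (t : F) (p : Polynomial F) :
    (p * (X - C t)).coeff 0 = - (t * p.coeff 0) := by
  rw [mul_sub, coeff_sub, mul_comm p (C t), coeff_C_mul, mul_coeff_zero]
  simp

/-- Scaling the roots of a product of linear factors scales the coefficients. -/
lemma coeff_prod_scale {F : Type} [Field F] (s : F) (r : ℕ → F) (n : ℕ) :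
    ∀ k, (∏ j ∈ Finset.range n, (X - C (s * r j))).coeff k
      = s ^ (n - k) * (∏ j ∈ Finset.range n, (X - C (r j))).coeff k := by
  induction n with
  | zero => intro k; cases k <;> simp
  | succ n ih =>
    intro k
    rw [Finset.prod_range_succ, Finset.prod_range_succ]
    set G := ∏ j ∈ Finset.range n, (X - C (r j)) with hG
    have hGdeg : G.natDegree = n := by
      rw [hG, natDegree_prod_of_monic]
      · simp only [natDegree_X_sub_C]; simp
      · intro j _; exact monic_X_sub_C _
    cases k with
    | zero =>
      rw [expand_coeff₀, expand_coeff₀, ih 0]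
      simp only [Nat.sub_zero, pow_succ]
      ring
    | succ k =>
      rw [expand_coeff, expand_coeff, ih k, ih (k + 1)]
      rcases le_or_gt (k + 1) n with h | h
      · have h1 : n - k = (n - (k + 1)) + 1 := by omega
        have h2 : n + 1 - (k + 1) = n - k := by omega
        rw [h1, h2, h1, pow_succ]
        ring
      · have hzero : G.coeff (k + 1) = 0 :=
          coeff_eq_zero_of_natDegree_lt (by omega)
        have h2 : n + 1 - (k + 1) = n - k := by omega
        rw [hzero, h2]
        ring

/-- All coefficients of `∏_{j<n} (X - a^j)` in degrees `0..n` are nonzero,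
provided `a ≠ 0` and `a^k ≠ 1` for `1 ≤ k ≤ n`. -/
lemma coeff_prod_geom_ne_zero {F : Type} [Field F] (a : F) (n : ℕ) (ha0 : a ≠ 0)
    (ha : ∀ k, 1 ≤ k → k ≤ n → a ^ k ≠ 1) :
    ∀ k ≤ n, (∏ j ∈ Finset.range n, (X - C (a ^ j))).coeff k ≠ 0 := by
  set g := ∏ j ∈ Finset.range n, (X - C (a ^ j)) with hg
  have hmonic : g.Monic := monic_prod_of_monic _ _ fun j _ => monic_X_sub_C _
  have hdeg : g.natDegree = n := by
    rw [hg, natDegree_prod_of_monic]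
    · simp only [natDegree_X_sub_C]; simp
    · intro j _; exact monic_X_sub_C _
  -- functional equation
  have hfe : (∏ j ∈ Finset.range n, (X - C (a * a ^ j))) * (X - C 1)
      = g * (X - C (a ^ n)) := by
    have h2 : (∏ j ∈ Finset.range n, (X - C (a * a ^ j))) * (X - C 1)
        = ∏ x ∈ Finset.range (n + 1), (X - C (a ^ x)) := by
      rw [Finset.prod_range_succ']
      simp [pow_succ']
    rw [h2, Finset.prod_range_succ]
  -- the coefficient recurrence
  have hrec : ∀ k, g.coeff k * (a ^ (n - k) - 1)
      = g.coeff (k + 1) * (a ^ (n - (k + 1)) - a ^ n) := by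
    intro k
    have := congrArg (fun p => coeff p (k + 1)) hfe
    simp only [expand_coeff] at this
    rw [coeff_prod_scale a (fun j => a ^ j) n k,
        coeff_prod_scale a (fun j => a ^ j) n (k + 1)] at this
    rw [← hg] at this
    ring_nf at this ⊢
    linear_combination this
  -- downward induction
  have main : ∀ d, d ≤ n → g.coeff (n - d) ≠ 0 := by
    intro d
    induction d with
    | zero =>
      intro _
      have h1 : g.coeff n = 1 := by rw [← hdeg]; exact hmonic.coeff_natDegree
      simp [Nat.sub_zero, h1]
    | succ d ih =>
      intro hdn
      set k := n - (d + 1) with hk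
      have hk1 : k + 1 = n - d := by omega
      have hne : a ^ (n - (k + 1)) - a ^ n ≠ 0 := by
        intro hzero
        have heq : a ^ (n - (k + 1)) = a ^ n := sub_eq_zero.mp hzero
        have h2 : a ^ n = a ^ (n - (k + 1)) * a ^ (k + 1) := by
          rw [← pow_add]; congr 1; omega
        have h3 := heq.trans h2
        have h4 := mul_left_cancel₀ (pow_ne_zero (n - (k + 1)) ha0)
          ((mul_one (a ^ (n - (k + 1)))).trans h3)
        exact ha (k + 1) (by omega) (by omega) h4.symm
      have hgk1 : g.coeff (k + 1) ≠ 0 := by rw [hk1]; exact ih (by omega)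
      have := hrec k
      intro hzero
      rw [hzero, zero_mul] at this
      exact mul_ne_zero hgk1 hne this.symm
  intro k hk
  have : n - (n - k) = k := by omega
  rw [← this]
  exact main (n - k) (by omega)

/-- Let `α` generate `𝔽_q^×`, `q ≥ ℓ + 2`, and let `i₁ < … < i_{ℓ+1}` be
nonnegative integers with `ℓ·i_{ℓ+1} + ℓ - 1 ≤ q - 2`. Then the `ℓ+1`
polynomials `f_u(x) = ∏_{j=0}^{ℓ-1} (x - α^{ℓ·i_u + j})` are linearly
independent over `𝔽_q`. -/
theorem shifted_root_products_linearIndependent (q ℓ : ℕ) (hℓ : 1 ≤ ℓ)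
    (hq2 : ℓ + 2 ≤ q)
    (F : Type) [Field F] [Fintype F] (hq : Fintype.card F = q)
    (α : Fˣ) (hα : ∀ x : Fˣ, x ∈ Subgroup.zpowers α)
    (i : Fin (ℓ + 1) → ℕ) (hi : StrictMono i)
    (hibound : ℓ * i (Fin.last ℓ) + ℓ - 1 ≤ q - 2)
    (f : Fin (ℓ + 1) → Polynomial F)
    (hf : ∀ u, f u = ∏ j ∈ Finset.range ℓ, (X - C ((α : F) ^ (ℓ * i u + j)))) :
    LinearIndependent F f := by
  set a : F := (α : F) with haa
  have ha0 : a ≠ 0 := Units.ne_zero α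
  have horder : orderOf α = q - 1 := by
    rw [orderOf_eq_card_of_forall_mem_zpowers hα, Nat.card_units, Nat.card_eq_fintype_card, hq]
  -- α^k ≠ 1 for 1 ≤ k ≤ q - 2
  have hpow_ne_one : ∀ k, 1 ≤ k → k ≤ q - 2 → a ^ k ≠ 1 := by
    intro k hk1 hk2 hone
    have : (α : Fˣ) ^ k = 1 := by
      apply Units.ext
      simpa using hone
    have hdvd := orderOf_dvd_of_pow_eq_one this
    rw [horder] at hdvd
    have := Nat.le_of_dvd (by omega) hdvd
    omega
  have hbound : ℓ * i (Fin.last ℓ) ≤ q - 2 := by omega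
  -- points
  set v : Fin (ℓ + 1) → F := fun u => a ^ (ℓ * i u) with hv
  have hvinj : Function.Injective v := by
    intro u u' huv
    have hle : ∀ w : Fin (ℓ + 1), ℓ * i w < orderOf α := by
      intro w
      have : i w ≤ i (Fin.last ℓ) := hi.monotone (Fin.le_last w)
      have : ℓ * i w ≤ ℓ * i (Fin.last ℓ) := Nat.mul_le_mul_left ℓ this
      omega
    have hu : (α : Fˣ) ^ (ℓ * i u) = (α : Fˣ) ^ (ℓ * i u') := by
      apply Units.ext
      simpa using huv
    have := pow_injOn_Iio_orderOf (Set.mem_Iio.mpr (hle u)) (Set.mem_Iio.mpr (hle u')) hu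
    have : i u = i u' := by
      have hℓ0 : ℓ ≠ 0 := by omega
      exact Nat.eq_of_mul_eq_mul_left (by omega) this
    exact hi.injective this
  rw [Fintype.linearIndependent_iff]
  intro c hc
  set g := ∏ j ∈ Finset.range ℓ, (X - C (a ^ j)) with hg
  have hgne : ∀ k ≤ ℓ, g.coeff k ≠ 0 :=
    coeff_prod_geom_ne_zero a ℓ ha0 (fun k h1 h2 => hpow_ne_one k h1 (by omega))
  have hcoeff : ∀ u k, (f u).coeff k = v u ^ (ℓ - k) * g.coeff k := by
    intro u k
    have hfu : f u = ∏ j ∈ Finset.range ℓ, (X - C (a ^ (ℓ * i u) * a ^ j)) := by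
      rw [hf u]
      apply Finset.prod_congr rfl
      intro j _
      rw [← pow_add]
    rw [hfu]
    have := coeff_prod_scale (a ^ (ℓ * i u)) (fun j => a ^ j) ℓ k
    rw [this, ← hg]
  have key : ∀ m : Fin (ℓ + 1), ∑ u, c u * v u ^ (m : ℕ) = 0 := by
    intro m
    have hmle : (m : ℕ) ≤ ℓ := Nat.lt_succ_iff.mp m.isLt
    have hk : ℓ - (ℓ - (m : ℕ)) = (m : ℕ) := by omega
    have h0 := congrArg (fun p => coeff p (ℓ - (m : ℕ))) hc
    simp only [finset_sum_coeff, coeff_smul, coeff_zero, smul_eq_mul] at h0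
    simp only [hcoeff, hk] at h0
    have hsum : ∑ u, c u * (v u ^ (m : ℕ) * g.coeff (ℓ - (m : ℕ)))
        = (∑ u, c u * v u ^ (m : ℕ)) * g.coeff (ℓ - (m : ℕ)) := by
      rw [Finset.sum_mul]
      apply Finset.sum_congr rfl
      intro u _
      ring
    rw [hsum] at h0
    exact (mul_eq_zero.mp h0).resolve_right (hgne _ (by omega))
  have := Matrix.eq_zero_of_forall_pow_sum_mul_pow_eq_zero hvinj key
  intro u
  exact congrFun this u
end

section
/- Let q be a prime power, ℓ an integer with 1 ≤ ℓ ≤ q − 2, and α a generator of 𝔽_q^×. Then every coefficient of the polynomial g(x) = (x − 1)(x − α)(x − α²)⋯(x − α^{ℓ−1}) ∈ 𝔽_q[x] is nonzero; i.e., for each 0 ≤ s ≤ ℓ, the coefficient of x^s in g is a nonzero element of 𝔽_q. -/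
open Polynomial

/-- All coefficients of the Reed–Solomon generator polynomial
`g(x) = (x - 1)(x - α)⋯(x - α^{ℓ-1})` are nonzero, where `α` generates
`𝔽_q^×` and `1 ≤ ℓ ≤ q - 2`. -/
theorem rs_generator_coeffs_ne_zero (q ℓ : ℕ) (hℓ : 1 ≤ ℓ) (hℓq : ℓ ≤ q - 2)
    (F : Type) [Field F] [Fintype F] (hq : Fintype.card F = q)
    (α : Fˣ) (hα : ∀ x : Fˣ, x ∈ Subgroup.zpowers α) :
    ∀ s : ℕ, s ≤ ℓ →
      (∏ j ∈ Finset.range ℓ, (X - C ((α : F) ^ j))).coeff s ≠ 0 := by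
  intro s hs h0
  classical
  set g : F[X] := ∏ j ∈ Finset.range ℓ, (X - C ((α : F) ^ j)) with hgdef
  have hmonic : g.Monic := monic_prod_of_monic _ _ fun j _ => monic_X_sub_C _
  have hdeg : g.natDegree = ℓ := by
    rw [hgdef, natDegree_prod _ _ fun j _ => X_sub_C_ne_zero _]
    simp only [natDegree_X_sub_C, Finset.sum_const, smul_eq_mul, mul_one, Finset.card_range]
  -- order of α is q - 1
  have hq3 : 3 ≤ q := by omega
  have horder : orderOf α = q - 1 := by
    rw [orderOf_eq_card_of_forall_mem_zpowers hα, Nat.card_eq_fintype_card,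
      Fintype.card_units, hq]
  -- s < ℓ
  have hsℓ : s < ℓ := by
    rcases lt_or_eq_of_le hs with h | h
    · exact h
    · exfalso
      rw [h, ← hdeg, hmonic.coeff_natDegree] at h0
      exact one_ne_zero h0
  have hℓmem : ℓ ∈ g.support := by
    rw [mem_support_iff, ← hdeg, hmonic.coeff_natDegree]
    exact one_ne_zero
  -- support has card ≤ ℓ
  have hsub : g.support ⊆ (Finset.range (ℓ + 1)).erase s := by
    intro d hd
    refine Finset.mem_erase.mpr ⟨?_, ?_⟩
    · rintro rfl; exact (mem_support_iff.mp hd) h0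
    · exact supp_subset_range (by omega : g.natDegree < ℓ + 1) hd
  have hcard : g.support.card ≤ ℓ := by
    have := Finset.card_le_card hsub
    rwa [Finset.card_erase_of_mem (Finset.mem_range.mpr (by omega)),
      Finset.card_range, Nat.add_sub_cancel] at this
  set n := g.support.card with hn
  set e := g.support.orderIsoOfFin rfl with he
  -- exponents in support are < q - 1
  have hlt : ∀ d ∈ g.support, d < q - 1 := by
    intro d hd
    have := Finset.mem_erase.mp (hsub hd)
    have := Finset.mem_range.mp this.2
    omega
  -- injectivity of i ↦ α ^ (e i)
  have hinj : Function.Injective fun i : Fin n => (α : F) ^ ((e i : ℕ)) := by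
    intro i j hij
    have h1 : (α : Fˣ) ^ ((e i : ℕ)) = α ^ ((e j : ℕ)) := by
      apply Units.ext
      simpa using hij
    rw [pow_inj_mod, horder,
      Nat.mod_eq_of_lt (hlt _ (e i).2), Nat.mod_eq_of_lt (hlt _ (e j).2)] at h1
    exact e.injective (Subtype.ext h1)
  -- g vanishes at α^j for j < ℓ
  have heval : ∀ j : Fin n, g.eval ((α : F) ^ (j : ℕ)) = 0 := by
    intro j
    rw [hgdef, eval_prod]
    apply Finset.prod_eq_zero (Finset.mem_range.mpr (lt_of_lt_of_le j.2 hcard))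
    simp
  -- rewrite eval as Vandermonde sum and conclude coefficients vanish
  have hzero : (fun i : Fin n => g.coeff (e i)) = 0 := by
    apply Matrix.eq_zero_of_forall_pow_sum_mul_pow_eq_zero hinj
    intro j
    have := heval j
    rw [eval_eq_sum, Polynomial.sum_def] at this
    rw [← this,
      ← Finset.sum_coe_sort g.support (fun d => g.coeff d * ((α : F) ^ (j : ℕ)) ^ d),
      ← Equiv.sum_comp e.toEquiv
        (fun d : g.support => g.coeff d * ((α : F) ^ (j : ℕ)) ^ (d : ℕ))]
    apply Finset.sum_congr rfl
    intro i _
    show g.coeff (e i) * _ = g.coeff (e i) * _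
    rw [← pow_mul, ← pow_mul, Nat.mul_comm]
    rfl
  -- but the leading coefficient is 1
  obtain ⟨i₀, hi₀⟩ := e.surjective ⟨ℓ, hℓmem⟩
  have hc : g.coeff (e i₀) = 0 := congrFun hzero i₀
  rw [hi₀] at hc
  simp only at hc
  have hone : g.coeff ℓ ≠ 0 := by
    rw [← hdeg, hmonic.coeff_natDegree]; exact one_ne_zero
  exact hone hc
end

section
/- Let n, N, m, L, k be positive integers with k ≤ ⌊m/L⌋. Suppose for each i ∈ [n] we are given m pairwise disjoint subsets R_{i,1},…,R_{i,m} of [N], such that for all i ≠ j in [n] and every s ∈ [m], the set R_{i,s} has nonempty intersection with at most L of the sets R_{j,1},…,R_{j,m}. Then for every request function r : Fin k → [n] there exists a choice function φ : Fin k → [m], injective on each fiber of r, such that the k sets R_{r(t),φ(t)}, t ∈ Fin k, are pairwise disjoint. -/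
/-- Greedy-selection lemma: suppose each of `n` symbols has `m` pairwise
disjoint recovering sets in `[N]`, and each recovering set of a symbol meets at
most `L` recovering sets of any other symbol. Then for every request
`r : Fin k → [n]` with `k ≤ ⌊m/L⌋` one can choose, injectively on each fiber
of `r`, one recovering set per request so that the chosen sets are pairwise
disjoint. -/
theorem greedy_recovering_sets (n N m L k : ℕ) (hn : 1 ≤ n) (hN : 1 ≤ N)
    (hm : 1 ≤ m) (hL : 1 ≤ L) (hk : 1 ≤ k) (hkm : k ≤ m / L)
    (R : Fin n → Fin m → Finset (Fin N))
    (hdisj : ∀ (i : Fin n) (s₁ s₂ : Fin m), s₁ ≠ s₂ →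
      Disjoint (R i s₁) (R i s₂))
    (hcross : ∀ (i j : Fin n), i ≠ j → ∀ s : Fin m,
      (Finset.univ.filter fun s' : Fin m => ¬ Disjoint (R i s) (R j s')).card
        ≤ L) :
    ∀ r : Fin k → Fin n, ∃ φ : Fin k → Fin m,
      (∀ t₁ t₂ : Fin k, r t₁ = r t₂ → φ t₁ = φ t₂ → t₁ = t₂) ∧
      (∀ t₁ t₂ : Fin k, t₁ ≠ t₂ →
        Disjoint (R (r t₁) (φ t₁)) (R (r t₂) (φ t₂))) := by
  intro r
  have hkL : k * L ≤ m := (Nat.le_div_iff_mul_le hL).mp hkm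
  suffices h : ∀ j, j ≤ k → ∃ φ : Fin k → Fin m,
      (∀ t₁ t₂ : Fin k, t₁.val < j → t₂.val < j → r t₁ = r t₂ → φ t₁ = φ t₂ → t₁ = t₂) ∧
      (∀ t₁ t₂ : Fin k, t₁.val < j → t₂.val < j → t₁ ≠ t₂ →
        Disjoint (R (r t₁) (φ t₁)) (R (r t₂) (φ t₂))) by
    obtain ⟨φ, h1, h2⟩ := h k le_rfl
    exact ⟨φ, fun t₁ t₂ => h1 t₁ t₂ t₁.isLt t₂.isLt,
      fun t₁ t₂ => h2 t₁ t₂ t₁.isLt t₂.isLt⟩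
  intro j
  induction j with
  | zero =>
    intro _
    exact ⟨fun _ => ⟨0, hm⟩, fun t₁ t₂ h _ => absurd h (Nat.not_lt_zero _),
      fun t₁ t₂ h _ => absurd h (Nat.not_lt_zero _)⟩
  | succ j ih =>
    intro hjk
    obtain ⟨φ, h1, h2⟩ := ih (Nat.le_of_succ_le hjk)
    have hjk' : j < k := hjk
    set tj : Fin k := ⟨j, hjk'⟩ with htj
    set T : Finset (Fin k) := Finset.univ.filter fun t' => t'.val < j with hT
    set B : Finset (Fin m) := T.biUnion (fun t' =>
      if r t' = r tj then {φ t'}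
      else Finset.univ.filter fun s => ¬ Disjoint (R (r tj) s) (R (r t') (φ t'))) with hB
    have hBcard : B.card < m := by
      have h1' : B.card ≤ ∑ t' ∈ T, (if r t' = r tj then ({φ t'} : Finset (Fin m))
          else Finset.univ.filter fun s => ¬ Disjoint (R (r tj) s) (R (r t') (φ t'))).card :=
        Finset.card_biUnion_le
      have h2' : ∀ t' ∈ T, (if r t' = r tj then ({φ t'} : Finset (Fin m))
          else Finset.univ.filter fun s => ¬ Disjoint (R (r tj) s) (R (r t') (φ t'))).card ≤ L := by
        intro t' _
        by_cases hrt : r t' = r tj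
        · simp [hrt, hL]
        · rw [if_neg hrt]
          have := hcross (r t') (r tj) hrt (φ t')
          calc (Finset.univ.filter fun s => ¬ Disjoint (R (r tj) s) (R (r t') (φ t'))).card
              = (Finset.univ.filter fun s' : Fin m =>
                  ¬ Disjoint (R (r t') (φ t')) (R (r tj) s')).card := by
                congr 1
                ext s
                simp [disjoint_comm]
            _ ≤ L := this
      have hTcard : T.card ≤ j := by
        have : T.card ≤ (Finset.range j).card := by
          apply Finset.card_le_card_of_injOn (fun t => t.val)
          · intro t ht
            simp only [hT, Finset.mem_filter] at ht
            simpa [List.mem_filter] using ht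
          · intro a _ b _ hab
            exact Fin.ext hab
        simpa using this
      have : B.card ≤ j * L := by
        calc B.card ≤ _ := h1'
          _ ≤ ∑ _t' ∈ T, L := Finset.sum_le_sum h2'
          _ = T.card * L := by rw [Finset.sum_const, smul_eq_mul]
          _ ≤ j * L := Nat.mul_le_mul_right L hTcard
      have hjL : j * L + L ≤ m := by
        calc j * L + L = (j + 1) * L := by ring
          _ ≤ k * L := Nat.mul_le_mul_right L hjk'
          _ ≤ m := hkL
      omega
    have hcompl : (Bᶜ : Finset (Fin m)).Nonempty := by
      rw [← Finset.card_pos, Finset.card_compl]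
      simp only [Fintype.card_fin]
      omega
    obtain ⟨s, hs⟩ := hcompl
    rw [Finset.mem_compl] at hs
    -- key facts about s vs earlier choices
    have key : ∀ t' : Fin k, t'.val < j →
        (r t' = r tj → s ≠ φ t') ∧ Disjoint (R (r tj) s) (R (r t') (φ t')) := by
      intro t' ht'
      have ht'T : t' ∈ T := by simp [hT, ht']
      have hnotin : s ∉ (if r t' = r tj then ({φ t'} : Finset (Fin m))
          else Finset.univ.filter fun s => ¬ Disjoint (R (r tj) s) (R (r t') (φ t'))) := by
        intro hmem
        exact hs (Finset.mem_biUnion.mpr ⟨t', ht'T, hmem⟩)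
      by_cases hrt : r t' = r tj
      · rw [if_pos hrt] at hnotin
        simp only [Finset.mem_singleton] at hnotin
        refine ⟨fun _ => hnotin, ?_⟩
        rw [hrt]
        exact hdisj (r tj) s (φ t') hnotin
      · rw [if_neg hrt] at hnotin
        simp only [Finset.mem_filter, Finset.mem_univ, true_and, not_not] at hnotin
        exact ⟨fun h => absurd h hrt, hnotin⟩
    set φ' : Fin k → Fin m := Function.update φ tj s with hφ'
    have hφ'eq : ∀ t : Fin k, t.val < j → φ' t = φ t := by
      intro t ht
      apply Function.update_of_ne
      intro h
      rw [h] at ht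
      exact absurd ht (lt_irrefl j)
    have hφ'tj : φ' tj = s := Function.update_self _ _ _
    refine ⟨φ', ?_, ?_⟩
    · intro t₁ t₂ ht₁ ht₂ hr hφeq
      have ht₁' : t₁.val < j ∨ t₁ = tj := by
        rcases Nat.lt_succ_iff_lt_or_eq.mp ht₁ with h | h
        · exact Or.inl h
        · exact Or.inr (Fin.ext h)
      have ht₂' : t₂.val < j ∨ t₂ = tj := by
        rcases Nat.lt_succ_iff_lt_or_eq.mp ht₂ with h | h
        · exact Or.inl h
        · exact Or.inr (Fin.ext h)
      rcases ht₁' with h₁ | h₁ <;> rcases ht₂' with h₂ | h₂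
      · exact h1 t₁ t₂ h₁ h₂ hr (by rwa [hφ'eq t₁ h₁, hφ'eq t₂ h₂] at hφeq)
      · subst h₂
        exfalso
        exact (key t₁ h₁).1 hr (by rw [← hφ'tj, ← hφ'eq t₁ h₁, hφeq])
      · subst h₁
        exfalso
        exact (key t₂ h₂).1 hr.symm (by rw [← hφ'tj, ← hφ'eq t₂ h₂, hφeq])
      · rw [h₁, h₂]
    · intro t₁ t₂ ht₁ ht₂ hne
      have ht₁' : t₁.val < j ∨ t₁ = tj := by
        rcases Nat.lt_succ_iff_lt_or_eq.mp ht₁ with h | h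
        · exact Or.inl h
        · exact Or.inr (Fin.ext h)
      have ht₂' : t₂.val < j ∨ t₂ = tj := by
        rcases Nat.lt_succ_iff_lt_or_eq.mp ht₂ with h | h
        · exact Or.inl h
        · exact Or.inr (Fin.ext h)
      rcases ht₁' with h₁ | h₁ <;> rcases ht₂' with h₂ | h₂
      · rw [hφ'eq t₁ h₁, hφ'eq t₂ h₂]
        exact h2 t₁ t₂ h₁ h₂ hne
      · subst h₂
        rw [hφ'eq t₁ h₁, hφ'tj]
        exact ((key t₁ h₁).2).symm
      · subst h₁
        rw [hφ'eq t₂ h₂, hφ'tj]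
        exact (key t₂ h₂).2
      · exact absurd (h₁.trans h₂.symm) hne
end
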